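/- arXiv:1606.06705 — 3 statements merged into one kernel-verified Lean document; each statement's English description precedes it below -/
import Mathlib

section
/- Let 0 < q, r < ∞, u, v, w weights on (0,∞), and {x_k} a covering sequence with ∫_0^{x_k} u = 2^k. Then the left-hand side L(h) := (∫_0^∞ (∫_x^∞ (∫_t^∞ h)^q w(t) dt)^{r/q} u(x) dx)^{1/r} is equivalent, uniformly in nonnegative measurable h, to ‖{2^{k/r} (∫_{x_k}^{x_{k+1}} (∫_s^{x_{k+1}} h)^q w(s) ds)^{1/q}}‖_{ℓ^r} + ‖{2^{k/r} (∫_{x_k}^{x_{k+1}} w)^{1/q} ∫_{x_{k+1}}^∞ h}‖_{ℓ^r}. -/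
open MeasureTheory ENNReal Set
open Filter Topology

set_option linter.unusedVariables false


lemma aux_two_ne_zero : (2:ℝ≥0∞) ≠ 0 := by norm_num
lemma aux_two_ne_top : (2:ℝ≥0∞) ≠ ∞ := by norm_num

lemma aux_add_rpow_le (a b : ℝ≥0∞) {s : ℝ} (hs : 0 ≤ s) :
    (a + b) ^ s ≤ 2 ^ s * (a ^ s + b ^ s) := by
  have h1 : a + b ≤ 2 * max a b := by
    rcases le_total a b with h | h
    · calc a + b ≤ b + b := by gcongr
        _ = 2 * b := (two_mul b).symm
        _ ≤ 2 * max a b := by gcongr; exact le_max_right _ _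
    · calc a + b ≤ a + a := by gcongr
        _ = 2 * a := (two_mul a).symm
        _ ≤ 2 * max a b := by gcongr; exact le_max_left _ _
  calc (a + b) ^ s ≤ (2 * max a b) ^ s := ENNReal.rpow_le_rpow h1 hs
    _ = 2 ^ s * (max a b) ^ s := ENNReal.mul_rpow_of_nonneg _ _ hs
    _ ≤ 2 ^ s * (a ^ s + b ^ s) := by
        gcongr
        rcases le_total a b with h | h
        · rw [max_eq_right h]; exact le_add_self
        · rw [max_eq_left h]; exact le_self_add

lemma aux_tsum_rpow_le {p : ℝ} (hp : 0 < p) (hp1 : p ≤ 1) (f : ℕ → ℝ≥0∞) :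
    (∑' n, f n) ^ p ≤ ∑' n, f n ^ p := by
  have hfin : ∀ s : Finset ℕ, (∑ i ∈ s, f i) ^ p ≤ ∑ i ∈ s, f i ^ p := by
    intro s
    induction s using Finset.induction with
    | empty => simp [ENNReal.zero_rpow_of_pos hp]
    | @insert a s hnot ih =>
        rw [Finset.sum_insert hnot, Finset.sum_insert hnot]
        calc (f a + ∑ i ∈ s, f i) ^ p ≤ f a ^ p + (∑ i ∈ s, f i) ^ p :=
              ENNReal.rpow_add_le_add_rpow _ _ hp.le hp1
          _ ≤ f a ^ p + ∑ i ∈ s, f i ^ p := by gcongr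
  have hs : Tendsto (fun s : Finset ℕ => (∑ i ∈ s, f i) ^ p) atTop (𝓝 ((∑' n, f n) ^ p)) :=
    (ENNReal.continuous_rpow_const.tendsto _).comp ENNReal.summable.hasSum
  exact le_of_tendsto hs (Filter.Eventually.of_forall fun s =>
    (hfin s).trans (ENNReal.sum_le_tsum s))

lemma aux_tsum_shift (b : ℤ → ℝ≥0∞) (n : ℤ) :
    ∑' k : ℤ, (2:ℝ≥0∞) ^ k * b (k + n) = 2 ^ (-n) * ∑' j : ℤ, (2:ℝ≥0∞) ^ j * b j := by
  have h1 : ∑' j : ℤ, (2:ℝ≥0∞) ^ j * b j = ∑' k : ℤ, (2:ℝ≥0∞) ^ (k + n) * b (k + n) :=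
    ((Equiv.addRight n).tsum_eq fun j => (2:ℝ≥0∞) ^ j * b j).symm
  have h2 : ∀ k : ℤ, (2:ℝ≥0∞) ^ (k + n) * b (k + n) = 2 ^ n * ((2:ℝ≥0∞) ^ k * b (k + n)) := by
    intro k
    rw [ENNReal.zpow_add aux_two_ne_zero aux_two_ne_top, mul_comm ((2:ℝ≥0∞) ^ k), mul_assoc]
  rw [h1]
  simp_rw [h2]
  rw [ENNReal.tsum_mul_left, ← mul_assoc, ← ENNReal.zpow_add aux_two_ne_zero aux_two_ne_top]
  simp

lemma aux_geom_ne_top {e : ℝ} (he : e < 0) : (∑' n : ℕ, ((2:ℝ≥0∞) ^ e) ^ n) ≠ ∞ := by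
  rw [ENNReal.tsum_geometric]
  have h1 : (2:ℝ≥0∞) ^ e < 1 := ENNReal.rpow_lt_one_of_one_lt_of_neg (by norm_num) he
  rw [Ne, ENNReal.inv_eq_top, tsub_eq_zero_iff_le]
  exact not_le.mpr h1

lemma aux_hardy {p : ℝ} (hp : 0 < p) :
    ∃ C : ℝ≥0∞, C ≠ ∞ ∧ ∀ a : ℤ → ℝ≥0∞,
      ∑' k : ℤ, (2:ℝ≥0∞) ^ k * (∑' n : ℕ, a (k + (n:ℤ))) ^ p
        ≤ C * ∑' j : ℤ, (2:ℝ≥0∞) ^ j * a j ^ p := by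
  rcases le_or_gt p 1 with hp1 | hp1
  · refine ⟨2, by norm_num, fun a => ?_⟩
    calc ∑' k : ℤ, (2:ℝ≥0∞) ^ k * (∑' n : ℕ, a (k + (n:ℤ))) ^ p
        ≤ ∑' k : ℤ, (2:ℝ≥0∞) ^ k * ∑' n : ℕ, a (k + (n:ℤ)) ^ p :=
          ENNReal.tsum_le_tsum fun k =>
            mul_le_mul_right (aux_tsum_rpow_le hp hp1 _) _
      _ = ∑' k : ℤ, ∑' n : ℕ, (2:ℝ≥0∞) ^ k * a (k + (n:ℤ)) ^ p := by
          simp_rw [ENNReal.tsum_mul_left]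
      _ = ∑' n : ℕ, ∑' k : ℤ, (2:ℝ≥0∞) ^ k * a (k + (n:ℤ)) ^ p := ENNReal.tsum_comm
      _ = ∑' n : ℕ, (2:ℝ≥0∞) ^ (-(n:ℤ)) * ∑' j : ℤ, (2:ℝ≥0∞) ^ j * a j ^ p := by
          refine tsum_congr fun n => ?_
          exact aux_tsum_shift (fun j => a j ^ p) (n : ℤ)
      _ = (∑' n : ℕ, (2:ℝ≥0∞) ^ (-(n:ℤ))) * ∑' j : ℤ, (2:ℝ≥0∞) ^ j * a j ^ p :=
          ENNReal.tsum_mul_right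
      _ = 2 * ∑' j : ℤ, (2:ℝ≥0∞) ^ j * a j ^ p := by
          congr 1
          have : ∀ n : ℕ, (2:ℝ≥0∞) ^ (-(n:ℤ)) = (2⁻¹ : ℝ≥0∞) ^ n := by
            intro n
            rw [ENNReal.zpow_neg, zpow_natCast,
              ENNReal.inv_pow]
          simp_rw [this]
          rw [ENNReal.tsum_geometric]
          rw [ENNReal.one_sub_inv_two, inv_inv]
  · -- p > 1
    set p' : ℝ := p.conjExponent with hp'def
    have hpq : p.HolderConjugate p' := Real.HolderConjugate.conjExponent hp1
    have hp'pos : 0 < p' := hpq.symm.pos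
    set τ : ℝ≥0∞ := (2:ℝ≥0∞) ^ (-(p' / (2 * p))) with hτ
    set σ : ℝ≥0∞ := (2:ℝ≥0∞) ^ (-(1:ℝ) / 2) with hσ
    have hτtop : (∑' n : ℕ, τ ^ n) ≠ ∞ :=
      aux_geom_ne_top (by
        have : 0 < p' / (2 * p) := div_pos hp'pos (by positivity)
        linarith)
    have hσtop : (∑' n : ℕ, σ ^ n) ≠ ∞ := aux_geom_ne_top (by norm_num)
    set C1 : ℝ≥0∞ := ∑' n : ℕ, τ ^ n with hC1
    set C2 : ℝ≥0∞ := C1 ^ ((1 / p') * p) with hC2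
    have hC2top : C2 ≠ ∞ :=
      (ENNReal.rpow_lt_top_of_nonneg (by positivity) hτtop).ne
    refine ⟨C2 * ∑' n : ℕ, σ ^ n, ENNReal.mul_ne_top hC2top hσtop, fun a => ?_⟩
    -- pointwise Hölder in k
    have key : ∀ k : ℤ, (∑' n : ℕ, a (k + (n:ℤ))) ^ p
        ≤ C2 * ∑' n : ℕ, (2:ℝ≥0∞) ^ ((n:ℝ) / 2) * a (k + (n:ℤ)) ^ p := by
      intro k
      set f : ℕ → ℝ≥0∞ := fun n => (2:ℝ≥0∞) ^ (-((n:ℝ) / (2 * p))) with hf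
      set g : ℕ → ℝ≥0∞ := fun n => (2:ℝ≥0∞) ^ ((n:ℝ) / (2 * p)) * a (k + (n:ℤ)) with hg
      have hfg : ∀ n, f n * g n = a (k + (n:ℤ)) := by
        intro n
        rw [hf, hg, ← mul_assoc, ← ENNReal.rpow_add _ _ aux_two_ne_zero aux_two_ne_top]
        simp
      have hold : (∑' n : ℕ, a (k + (n:ℤ)))
          ≤ (∑' n : ℕ, f n ^ p') ^ (1 / p') * (∑' n : ℕ, g n ^ p) ^ (1 / p) := by
        have := ENNReal.lintegral_mul_le_Lp_mul_Lq (Measure.count : Measure ℕ) hpq.symm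
          (f := f) (g := g) measurable_from_top.aemeasurable
          measurable_from_top.aemeasurable
        simp_rw [lintegral_count, Pi.mul_apply] at this
        simpa [hfg] using this
      have hfp' : ∀ n : ℕ, f n ^ p' = τ ^ n := by
        intro n
        rw [hf, hτ, ← ENNReal.rpow_natCast ((2:ℝ≥0∞) ^ (-(p' / (2 * p)))) n,
          ← ENNReal.rpow_mul, ← ENNReal.rpow_mul]
        congr 1
        ring
      have hgp : ∀ n : ℕ, g n ^ p = (2:ℝ≥0∞) ^ ((n:ℝ) / 2) * a (k + (n:ℤ)) ^ p := by
        intro n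
        rw [hg, ENNReal.mul_rpow_of_nonneg _ _ hp.le, ← ENNReal.rpow_mul]
        congr 2
        field_simp
      calc (∑' n : ℕ, a (k + (n:ℤ))) ^ p
          ≤ ((∑' n : ℕ, f n ^ p') ^ (1 / p') * (∑' n : ℕ, g n ^ p) ^ (1 / p)) ^ p :=
            ENNReal.rpow_le_rpow hold hp.le
        _ = C2 * ∑' n : ℕ, (2:ℝ≥0∞) ^ ((n:ℝ) / 2) * a (k + (n:ℤ)) ^ p := by
            rw [ENNReal.mul_rpow_of_nonneg _ _ hp.le, ← ENNReal.rpow_mul,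
              ← ENNReal.rpow_mul, one_div_mul_cancel hp.ne', ENNReal.rpow_one]
            simp_rw [hfp', hgp]
            rfl
    calc ∑' k : ℤ, (2:ℝ≥0∞) ^ k * (∑' n : ℕ, a (k + (n:ℤ))) ^ p
        ≤ ∑' k : ℤ, (2:ℝ≥0∞) ^ k *
            (C2 * ∑' n : ℕ, (2:ℝ≥0∞) ^ ((n:ℝ) / 2) * a (k + (n:ℤ)) ^ p) :=
          ENNReal.tsum_le_tsum fun k => mul_le_mul_right (key k) _
      _ = C2 * ∑' k : ℤ, ∑' n : ℕ,
            (2:ℝ≥0∞) ^ ((n:ℝ) / 2) * ((2:ℝ≥0∞) ^ k * a (k + (n:ℤ)) ^ p) := by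
          rw [← ENNReal.tsum_mul_left]
          refine tsum_congr fun k => ?_
          rw [← mul_assoc, mul_comm ((2:ℝ≥0∞) ^ k) C2, mul_assoc, ← ENNReal.tsum_mul_left]
          congr 1
          refine tsum_congr fun n => ?_
          ring
      _ = C2 * ∑' n : ℕ, (2:ℝ≥0∞) ^ ((n:ℝ) / 2) *
            ∑' k : ℤ, (2:ℝ≥0∞) ^ k * a (k + (n:ℤ)) ^ p := by
          rw [ENNReal.tsum_comm]
          congr 1
          exact tsum_congr fun n => by rw [ENNReal.tsum_mul_left]
      _ = C2 * ∑' n : ℕ, ((2:ℝ≥0∞) ^ ((n:ℝ) / 2) * (2:ℝ≥0∞) ^ (-(n:ℤ))) *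
            ∑' j : ℤ, (2:ℝ≥0∞) ^ j * a j ^ p := by
          congr 1
          refine tsum_congr fun n => ?_
          rw [aux_tsum_shift (fun j => a j ^ p) (n : ℤ), mul_assoc]
      _ = C2 * ((∑' n : ℕ, σ ^ n) * ∑' j : ℤ, (2:ℝ≥0∞) ^ j * a j ^ p) := by
          congr 1
          rw [← ENNReal.tsum_mul_right]
          refine tsum_congr fun n => ?_
          congr 2
          rw [hσ, ← ENNReal.rpow_intCast 2 (-(n:ℤ)),
            ← ENNReal.rpow_add _ _ aux_two_ne_zero aux_two_ne_top,
            ← ENNReal.rpow_natCast ((2:ℝ≥0∞) ^ ((-1:ℝ) / 2)) n, ← ENNReal.rpow_mul]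
          congr 1
          push_cast
          ring
      _ = (C2 * ∑' n : ℕ, σ ^ n) * ∑' j : ℤ, (2:ℝ≥0∞) ^ j * a j ^ p := by ring


/-- A weight on `(0,∞)`: measurable, with positive finite integral over each `(0,x]`. -/
def IsWeight (v : ℝ → ℝ≥0∞) : Prop :=
  Measurable v ∧ ∀ x > (0 : ℝ),
    (0 < ∫⁻ t in Set.Ioc 0 x, v t) ∧ (∫⁻ t in Set.Ioc 0 x, v t) < ∞

/-- discretization of the left-hand side:
`L(h) = (∫_0^∞ (∫_x^∞ (∫_t^∞ h)^q w(t)dt)^{r/q} u(x)dx)^{1/r}` is equivalent,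
uniformly in `h ≥ 0`, to
`‖{2^{k/r}(∫_{x_k}^{x_{k+1}}(∫_s^{x_{k+1}} h)^q w ds)^{1/q}}‖_{ℓ^r}
  + ‖{2^{k/r}(∫_{x_k}^{x_{k+1}} w)^{1/q} ∫_{x_{k+1}}^∞ h}‖_{ℓ^r}`. -/
theorem lhs_discretization_two_sums
    (q r : ℝ) (hq : 0 < q) (hr : 0 < r)
    (u v w : ℝ → ℝ≥0∞) (hu : IsWeight u) (hv : IsWeight v) (hw : IsWeight w)
    (x : ℤ → ℝ) (hx : StrictMono x) (hxpos : ∀ k, 0 < x k)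
    (hxu : ∀ k : ℤ, (∫⁻ t in Set.Ioc 0 (x k), u t) = 2 ^ k)
    (hcov : (⋃ k : ℤ, Set.Ioc (x k) (x (k + 1))) = Set.Ioi (0 : ℝ)) :
    ∃ c₁ c₂ : ℝ≥0∞, 0 < c₁ ∧ c₂ < ∞ ∧
      ∀ h : ℝ → ℝ≥0∞, Measurable h →
        (c₁ * ((∑' k : ℤ, (2 : ℝ≥0∞) ^ (k : ℤ) *
                  (∫⁻ s in Set.Ioc (x k) (x (k + 1)),
                    (∫⁻ y in Set.Ioc s (x (k + 1)), h y) ^ q * w s) ^ (r / q)) ^ (1 / r)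
              + (∑' k : ℤ, (2 : ℝ≥0∞) ^ (k : ℤ) *
                  (∫⁻ s in Set.Ioc (x k) (x (k + 1)), w s) ^ (r / q) *
                  (∫⁻ y in Set.Ioi (x (k + 1)), h y) ^ r) ^ (1 / r))
            ≤ (∫⁻ t in Set.Ioi (0 : ℝ),
                (∫⁻ s in Set.Ioi t, (∫⁻ y in Set.Ioi s, h y) ^ q * w s) ^ (r / q)
                  * u t) ^ (1 / r)) ∧
        ((∫⁻ t in Set.Ioi (0 : ℝ),
                (∫⁻ s in Set.Ioi t, (∫⁻ y in Set.Ioi s, h y) ^ q * w s) ^ (r / q)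
                  * u t) ^ (1 / r)
            ≤ c₂ * ((∑' k : ℤ, (2 : ℝ≥0∞) ^ (k : ℤ) *
                  (∫⁻ s in Set.Ioc (x k) (x (k + 1)),
                    (∫⁻ y in Set.Ioc s (x (k + 1)), h y) ^ q * w s) ^ (r / q)) ^ (1 / r)
              + (∑' k : ℤ, (2 : ℝ≥0∞) ^ (k : ℤ) *
                  (∫⁻ s in Set.Ioc (x k) (x (k + 1)), w s) ^ (r / q) *
                  (∫⁻ y in Set.Ioi (x (k + 1)), h y) ^ r) ^ (1 / r))) := by
  have hp : 0 < r / q := div_pos hr hq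
  obtain ⟨C, hCtop, hC⟩ := aux_hardy hp
  have hum : Measurable u := hu.1
  have hwm : Measurable w := hw.1
  have h2q_ne_top : ((2:ℝ≥0∞) ^ q) ≠ ∞ :=
    (ENNReal.rpow_lt_top_of_nonneg hq.le aux_two_ne_top).ne
  have h2cancel : (2:ℝ≥0∞) * 2 ^ (-1 : ℤ) = 1 := by
    rw [ENNReal.zpow_neg, zpow_one]
    exact ENNReal.mul_inv_cancel aux_two_ne_zero aux_two_ne_top
  have hqp : q * (r / q) = r := by field_simp
  have h2qp : ((2:ℝ≥0∞) ^ q) ^ (r / q) = (2:ℝ≥0∞) ^ r := by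
    rw [← ENNReal.rpow_mul, hqp]
  -- pairwise disjointness of the covering intervals
  have hIdisj : Pairwise (Function.onFun Disjoint fun k : ℤ => Set.Ioc (x k) (x (k + 1))) := by
    have key : ∀ i j : ℤ, i < j →
        Disjoint (Set.Ioc (x i) (x (i + 1))) (Set.Ioc (x j) (x (j + 1))) := by
      intro i j hij
      refine Set.disjoint_left.mpr fun t hti htj => ?_
      have h1 : x (i + 1) ≤ x j := hx.monotone (by omega)
      have h2 := hti.2
      have h3 := htj.1
      linarith
    intro i j hij
    rcases lt_or_gt_of_ne hij with hlt | hlt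
    · exact key i j hlt
    · exact (key j i hlt).symm
  -- measure of each interval
  have hU : ∀ k : ℤ, (∫⁻ t in Set.Ioc (x k) (x (k + 1)), u t) = 2 ^ k := by
    intro k
    have hsplit : Set.Ioc (0:ℝ) (x (k + 1)) =
        Set.Ioc 0 (x k) ∪ Set.Ioc (x k) (x (k + 1)) :=
      (Set.Ioc_union_Ioc_eq_Ioc (hxpos k).le (hx.monotone (by omega))).symm
    have h2 := hxu (k + 1)
    rw [hsplit, lintegral_union measurableSet_Ioc (Set.Ioc_disjoint_Ioc_of_le le_rfl), hxu k] at h2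
    have h3 : (2:ℝ≥0∞) ^ (k + 1) = 2 ^ k + 2 ^ k := by
      rw [ENNReal.zpow_add aux_two_ne_zero aux_two_ne_top, zpow_one, mul_two]
    rw [h3] at h2
    exact (ENNReal.add_right_inj
      (ENNReal.zpow_lt_top aux_two_ne_zero aux_two_ne_top k).ne).mp h2
  -- tail decomposition of Ioi (x k)
  have hIoi : ∀ k : ℤ, Set.Ioi (x k) =
      ⋃ n : ℕ, Set.Ioc (x (k + (n:ℤ))) (x (k + (n:ℤ) + 1)) := by
    intro k
    ext t
    simp only [Set.mem_Ioi, Set.mem_iUnion, Set.mem_Ioc]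
    constructor
    · intro ht
      have ht0 : t ∈ Set.Ioi (0:ℝ) := lt_trans (hxpos k) ht
      rw [← hcov] at ht0
      obtain ⟨j, hj1, hj2⟩ := Set.mem_iUnion.mp ht0
      have hkj : k ≤ j := by
        by_contra hc
        push_neg at hc
        have : x (j + 1) ≤ x k := hx.monotone (by omega)
        linarith
      refine ⟨(j - k).toNat, ?_, ?_⟩
      · have he : k + ((j - k).toNat : ℤ) = j := by omega
        rw [he]; exact hj1
      · have he : k + ((j - k).toNat : ℤ) + 1 = j + 1 := by omega
        rw [he]; exact hj2
    · rintro ⟨n, hn1, hn2⟩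
      exact lt_of_le_of_lt (hx.monotone (by omega)) hn1
  refine ⟨(2 * (2:ℝ≥0∞) ^ (1 / r))⁻¹,
    ((2:ℝ≥0∞) ^ r * C * (2:ℝ≥0∞) ^ (r / q)) ^ (1 / r) * (2:ℝ≥0∞) ^ (1 / r),
    ?_, ?_, fun h hh => ?_⟩
  · exact ENNReal.inv_pos.mpr (ENNReal.mul_ne_top aux_two_ne_top
      (ENNReal.rpow_lt_top_of_nonneg (by positivity) aux_two_ne_top).ne)
  · have hKtop : ((2:ℝ≥0∞) ^ r * C * (2:ℝ≥0∞) ^ (r / q)) ≠ ∞ :=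
      ENNReal.mul_ne_top (ENNReal.mul_ne_top
        (ENNReal.rpow_lt_top_of_nonneg hr.le aux_two_ne_top).ne hCtop)
        (ENNReal.rpow_lt_top_of_nonneg hp.le aux_two_ne_top).ne
    exact lt_top_iff_ne_top.mpr (ENNReal.mul_ne_top
      (ENNReal.rpow_lt_top_of_nonneg (by positivity) hKtop).ne
      (ENNReal.rpow_lt_top_of_nonneg (by positivity) aux_two_ne_top).ne)
  -- main part, for a fixed h
  set A : ℤ → ℝ≥0∞ := fun k =>
    ∫⁻ s in Set.Ioc (x k) (x (k + 1)),
      (∫⁻ y in Set.Ioc s (x (k + 1)), h y) ^ q * w s with hAdef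
  set Wf : ℤ → ℝ≥0∞ := fun k => ∫⁻ s in Set.Ioc (x k) (x (k + 1)), w s with hWdef
  set B : ℤ → ℝ≥0∞ := fun k => ∫⁻ y in Set.Ioi (x (k + 1)), h y with hBdef
  set D : ℤ → ℝ≥0∞ := fun k =>
    ∫⁻ s in Set.Ioc (x k) (x (k + 1)), (∫⁻ y in Set.Ioi s, h y) ^ q * w s with hDdef
  set F : ℝ → ℝ≥0∞ := fun t =>
    ∫⁻ s in Set.Ioi t, (∫⁻ y in Set.Ioi s, h y) ^ q * w s with hFdef
  -- pointwise splitting of the inner integral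
  have hInner : ∀ k : ℤ, ∀ s ∈ Set.Ioc (x k) (x (k + 1)),
      (∫⁻ y in Set.Ioi s, h y) = (∫⁻ y in Set.Ioc s (x (k + 1)), h y) + B k := by
    intro k s hs
    rw [hBdef, ← Set.Ioc_union_Ioi_eq_Ioi hs.2,
      lintegral_union measurableSet_Ioi Set.Ioc_disjoint_Ioi_same]
  have hDle : ∀ k : ℤ, D k ≤ 2 ^ q * (A k + Wf k * B k ^ q) := by
    intro k
    have step1 : D k ≤ ∫⁻ s in Set.Ioc (x k) (x (k + 1)),
        (2 ^ q * ((∫⁻ y in Set.Ioc s (x (k + 1)), h y) ^ q * w s)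
          + (2 ^ q * B k ^ q) * w s) := by
      refine setLIntegral_mono' measurableSet_Ioc fun s hs => ?_
      rw [hInner k s hs]
      calc ((∫⁻ y in Set.Ioc s (x (k + 1)), h y) + B k) ^ q * w s
          ≤ (2 ^ q * ((∫⁻ y in Set.Ioc s (x (k + 1)), h y) ^ q + B k ^ q)) * w s :=
            mul_le_mul_left (aux_add_rpow_le _ _ hq.le) _
        _ = 2 ^ q * ((∫⁻ y in Set.Ioc s (x (k + 1)), h y) ^ q * w s)
              + (2 ^ q * B k ^ q) * w s := by ring
    calc D k ≤ _ := step1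
      _ = 2 ^ q * A k + 2 ^ q * B k ^ q * Wf k := by
          rw [lintegral_add_right _ (hwm.const_mul _),
            lintegral_const_mul' _ _ h2q_ne_top, lintegral_const_mul _ hwm]
      _ = 2 ^ q * (A k + Wf k * B k ^ q) := by ring
  have hAle : ∀ k : ℤ, A k ≤ D k := by
    intro k
    refine setLIntegral_mono' measurableSet_Ioc fun s hs => ?_
    exact mul_le_mul_left (ENNReal.rpow_le_rpow
      (lintegral_mono_set Set.Ioc_subset_Ioi_self) hq.le) _
  have hWBle : ∀ k : ℤ, Wf k * B k ^ q ≤ D k := by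
    intro k
    calc Wf k * B k ^ q = B k ^ q * Wf k := mul_comm _ _
      _ = ∫⁻ s in Set.Ioc (x k) (x (k + 1)), B k ^ q * w s :=
          (lintegral_const_mul _ hwm).symm
      _ ≤ D k := by
          refine setLIntegral_mono' measurableSet_Ioc fun s hs => ?_
          exact mul_le_mul_left (ENNReal.rpow_le_rpow
            (lintegral_mono_set (Set.Ioi_subset_Ioi hs.2)) hq.le) _
  have hFk : ∀ k : ℤ, F (x k) = ∑' n : ℕ, D (k + (n:ℤ)) := by
    intro k
    have hd : Pairwise (Function.onFun Disjoint fun n : ℕ =>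
        Set.Ioc (x (k + (n:ℤ))) (x (k + (n:ℤ) + 1))) := by
      intro m n hmn
      exact hIdisj (show k + (m:ℤ) ≠ k + (n:ℤ) by omega)
    show (∫⁻ s in Set.Ioi (x k), (∫⁻ y in Set.Ioi s, h y) ^ q * w s) = _
    rw [hIoi k, lintegral_iUnion (fun _ => measurableSet_Ioc) hd]
  have hFD : ∀ k : ℤ, D k ≤ F (x k) :=
    fun k => lintegral_mono_set Set.Ioc_subset_Ioi_self
  have hsum : (∫⁻ t in Set.Ioi (0:ℝ), F t ^ (r / q) * u t)
      = ∑' k : ℤ, ∫⁻ t in Set.Ioc (x k) (x (k + 1)), F t ^ (r / q) * u t := by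
    rw [← hcov, lintegral_iUnion (fun _ => measurableSet_Ioc) hIdisj]
  have hup : ∀ k : ℤ, (∫⁻ t in Set.Ioc (x k) (x (k + 1)), F t ^ (r / q) * u t)
      ≤ 2 ^ (k:ℤ) * F (x k) ^ (r / q) := by
    intro k
    calc (∫⁻ t in Set.Ioc (x k) (x (k + 1)), F t ^ (r / q) * u t)
        ≤ ∫⁻ t in Set.Ioc (x k) (x (k + 1)), F (x k) ^ (r / q) * u t := by
          refine setLIntegral_mono (hum.const_mul _) fun t ht => ?_
          exact mul_le_mul_left (ENNReal.rpow_le_rpow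
            (lintegral_mono_set (Set.Ioi_subset_Ioi ht.1.le)) hp.le) _
      _ = F (x k) ^ (r / q) * ∫⁻ t in Set.Ioc (x k) (x (k + 1)), u t :=
          lintegral_const_mul _ hum
      _ = 2 ^ (k:ℤ) * F (x k) ^ (r / q) := by rw [hU k, mul_comm]
  have hlow : ∀ k : ℤ, 2 ^ (k:ℤ) * F (x (k + 1)) ^ (r / q)
      ≤ ∫⁻ t in Set.Ioc (x k) (x (k + 1)), F t ^ (r / q) * u t := by
    intro k
    calc (2:ℝ≥0∞) ^ (k:ℤ) * F (x (k + 1)) ^ (r / q)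
        = F (x (k + 1)) ^ (r / q) * ∫⁻ t in Set.Ioc (x k) (x (k + 1)), u t := by
          rw [hU k, mul_comm]
      _ = ∫⁻ t in Set.Ioc (x k) (x (k + 1)), F (x (k + 1)) ^ (r / q) * u t :=
          (lintegral_const_mul _ hum).symm
      _ ≤ ∫⁻ t in Set.Ioc (x k) (x (k + 1)), F t ^ (r / q) * u t := by
          refine setLIntegral_mono' measurableSet_Ioc fun t ht => ?_
          exact mul_le_mul_left (ENNReal.rpow_le_rpow
            (lintegral_mono_set (Set.Ioi_subset_Ioi ht.2)) hp.le) _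
  have hWB_rpow : ∀ j : ℤ, (Wf j * B j ^ q) ^ (r / q) = Wf j ^ (r / q) * B j ^ r := by
    intro j
    rw [ENNReal.mul_rpow_of_nonneg _ _ hp.le, ← ENNReal.rpow_mul, hqp]
  constructor
  · -- lower bound
    have hT1 : (∑' j : ℤ, (2:ℝ≥0∞) ^ (j:ℤ) * A j ^ (r / q))
        ≤ 2 * ∫⁻ t in Set.Ioi (0:ℝ), F t ^ (r / q) * u t := by
      have hstep : (∑' k : ℤ, (2:ℝ≥0∞) ^ (k:ℤ) * A (k + 1) ^ (r / q))
          ≤ ∫⁻ t in Set.Ioi (0:ℝ), F t ^ (r / q) * u t := by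
        rw [hsum]
        refine ENNReal.tsum_le_tsum fun k => le_trans ?_ (hlow k)
        exact mul_le_mul_right (ENNReal.rpow_le_rpow
          ((hAle (k + 1)).trans (hFD (k + 1))) hp.le) _
      have h1 : (∑' j : ℤ, (2:ℝ≥0∞) ^ (j:ℤ) * A j ^ (r / q))
          = 2 * ∑' k : ℤ, (2:ℝ≥0∞) ^ (k:ℤ) * A (k + 1) ^ (r / q) := by
        rw [aux_tsum_shift (fun j => A j ^ (r / q)) 1, ← mul_assoc, h2cancel, one_mul]
      rw [h1]
      exact mul_le_mul_right hstep 2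
    have hT2 : (∑' j : ℤ, (2:ℝ≥0∞) ^ (j:ℤ) * Wf j ^ (r / q) * B j ^ r)
        ≤ 2 * ∫⁻ t in Set.Ioi (0:ℝ), F t ^ (r / q) * u t := by
      have hassoc : (∑' j : ℤ, (2:ℝ≥0∞) ^ (j:ℤ) * Wf j ^ (r / q) * B j ^ r)
          = ∑' j : ℤ, (2:ℝ≥0∞) ^ (j:ℤ) * (Wf j ^ (r / q) * B j ^ r) :=
        tsum_congr fun j => mul_assoc _ _ _
      have hstep : (∑' k : ℤ, (2:ℝ≥0∞) ^ (k:ℤ) *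
            (Wf (k + 1) ^ (r / q) * B (k + 1) ^ r))
          ≤ ∫⁻ t in Set.Ioi (0:ℝ), F t ^ (r / q) * u t := by
        rw [hsum]
        refine ENNReal.tsum_le_tsum fun k => le_trans ?_ (hlow k)
        refine mul_le_mul_right ?_ _
        rw [← hWB_rpow (k + 1)]
        exact ENNReal.rpow_le_rpow ((hWBle (k + 1)).trans (hFD (k + 1))) hp.le
      have h1 : (∑' j : ℤ, (2:ℝ≥0∞) ^ (j:ℤ) * (Wf j ^ (r / q) * B j ^ r))
          = 2 * ∑' k : ℤ, (2:ℝ≥0∞) ^ (k:ℤ) *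
              (Wf (k + 1) ^ (r / q) * B (k + 1) ^ r) := by
        rw [aux_tsum_shift (fun j => Wf j ^ (r / q) * B j ^ r) 1, ← mul_assoc,
          h2cancel, one_mul]
      rw [hassoc, h1]
      exact mul_le_mul_right hstep 2
    show (2 * (2:ℝ≥0∞) ^ (1 / r))⁻¹ *
        ((∑' k : ℤ, (2:ℝ≥0∞) ^ (k:ℤ) * A k ^ (r / q)) ^ (1 / r)
          + (∑' k : ℤ, (2:ℝ≥0∞) ^ (k:ℤ) * Wf k ^ (r / q) * B k ^ r) ^ (1 / r))
      ≤ (∫⁻ t in Set.Ioi (0:ℝ), F t ^ (r / q) * u t) ^ (1 / r)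
    set I0 : ℝ≥0∞ := ∫⁻ t in Set.Ioi (0:ℝ), F t ^ (r / q) * u t with hI0def
    have hb1 : (∑' k : ℤ, (2:ℝ≥0∞) ^ (k:ℤ) * A k ^ (r / q)) ^ (1 / r)
        ≤ (2:ℝ≥0∞) ^ (1 / r) * I0 ^ (1 / r) := by
      rw [← ENNReal.mul_rpow_of_nonneg _ _ (by positivity : (0:ℝ) ≤ 1 / r)]
      exact ENNReal.rpow_le_rpow hT1 (by positivity)
    have hb2 : (∑' k : ℤ, (2:ℝ≥0∞) ^ (k:ℤ) * Wf k ^ (r / q) * B k ^ r) ^ (1 / r)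
        ≤ (2:ℝ≥0∞) ^ (1 / r) * I0 ^ (1 / r) := by
      rw [← ENNReal.mul_rpow_of_nonneg _ _ (by positivity : (0:ℝ) ≤ 1 / r)]
      exact ENNReal.rpow_le_rpow hT2 (by positivity)
    calc (2 * (2:ℝ≥0∞) ^ (1 / r))⁻¹ *
        ((∑' k : ℤ, (2:ℝ≥0∞) ^ (k:ℤ) * A k ^ (r / q)) ^ (1 / r)
          + (∑' k : ℤ, (2:ℝ≥0∞) ^ (k:ℤ) * Wf k ^ (r / q) * B k ^ r) ^ (1 / r))
        ≤ (2 * (2:ℝ≥0∞) ^ (1 / r))⁻¹ *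
            ((2:ℝ≥0∞) ^ (1 / r) * I0 ^ (1 / r) + (2:ℝ≥0∞) ^ (1 / r) * I0 ^ (1 / r)) :=
          mul_le_mul_right (add_le_add hb1 hb2) _
      _ = ((2 * (2:ℝ≥0∞) ^ (1 / r))⁻¹ * (2 * (2:ℝ≥0∞) ^ (1 / r))) * I0 ^ (1 / r) := by
          ring
      _ = I0 ^ (1 / r) := by
          rw [ENNReal.inv_mul_cancel, one_mul]
          · exact mul_ne_zero aux_two_ne_zero
              (ENNReal.rpow_pos (by norm_num) aux_two_ne_top).ne'
          · exact ENNReal.mul_ne_top aux_two_ne_top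
              (ENNReal.rpow_lt_top_of_nonneg (by positivity) aux_two_ne_top).ne
  · -- upper bound
    set a : ℤ → ℝ≥0∞ := fun j => A j + Wf j * B j ^ q with hadef
    have hIle : (∫⁻ t in Set.Ioi (0:ℝ), F t ^ (r / q) * u t)
        ≤ ((2:ℝ≥0∞) ^ r * C * (2:ℝ≥0∞) ^ (r / q)) *
          ((∑' k : ℤ, (2:ℝ≥0∞) ^ (k:ℤ) * A k ^ (r / q))
            + ∑' k : ℤ, (2:ℝ≥0∞) ^ (k:ℤ) * Wf k ^ (r / q) * B k ^ r) := by
      have hFle : ∀ k : ℤ, F (x k) ≤ 2 ^ q * ∑' n : ℕ, a (k + (n:ℤ)) := by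
        intro k
        rw [hFk k, ← ENNReal.tsum_mul_left]
        exact ENNReal.tsum_le_tsum fun n => hDle _
      have hsplitsum : (∑' j : ℤ, (2:ℝ≥0∞) ^ (j:ℤ) *
            ((2:ℝ≥0∞) ^ (r / q) * (A j ^ (r / q) + Wf j ^ (r / q) * B j ^ r)))
          = (2:ℝ≥0∞) ^ (r / q) *
            ((∑' j : ℤ, (2:ℝ≥0∞) ^ (j:ℤ) * A j ^ (r / q))
              + ∑' j : ℤ, (2:ℝ≥0∞) ^ (j:ℤ) * (Wf j ^ (r / q) * B j ^ r)) := by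
        calc (∑' j : ℤ, (2:ℝ≥0∞) ^ (j:ℤ) *
              ((2:ℝ≥0∞) ^ (r / q) * (A j ^ (r / q) + Wf j ^ (r / q) * B j ^ r)))
            = ∑' j : ℤ, (2:ℝ≥0∞) ^ (r / q) *
                ((2:ℝ≥0∞) ^ (j:ℤ) * A j ^ (r / q)
                  + (2:ℝ≥0∞) ^ (j:ℤ) * (Wf j ^ (r / q) * B j ^ r)) :=
              tsum_congr fun j => by ring
          _ = (2:ℝ≥0∞) ^ (r / q) * ∑' j : ℤ,
                ((2:ℝ≥0∞) ^ (j:ℤ) * A j ^ (r / q)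
                  + (2:ℝ≥0∞) ^ (j:ℤ) * (Wf j ^ (r / q) * B j ^ r)) :=
              ENNReal.tsum_mul_left
          _ = _ := by rw [ENNReal.tsum_add]
      calc (∫⁻ t in Set.Ioi (0:ℝ), F t ^ (r / q) * u t)
          = ∑' k : ℤ, ∫⁻ t in Set.Ioc (x k) (x (k + 1)), F t ^ (r / q) * u t := hsum
        _ ≤ ∑' k : ℤ, (2:ℝ≥0∞) ^ (k:ℤ) * F (x k) ^ (r / q) :=
            ENNReal.tsum_le_tsum hup
        _ ≤ ∑' k : ℤ, (2:ℝ≥0∞) ^ (k:ℤ) *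
              ((2:ℝ≥0∞) ^ r * (∑' n : ℕ, a (k + (n:ℤ))) ^ (r / q)) := by
            refine ENNReal.tsum_le_tsum fun k => mul_le_mul_right ?_ _
            calc F (x k) ^ (r / q)
                ≤ (2 ^ q * ∑' n : ℕ, a (k + (n:ℤ))) ^ (r / q) :=
                  ENNReal.rpow_le_rpow (hFle k) hp.le
              _ = (2:ℝ≥0∞) ^ r * (∑' n : ℕ, a (k + (n:ℤ))) ^ (r / q) := by
                  rw [ENNReal.mul_rpow_of_nonneg _ _ hp.le, h2qp]
        _ = (2:ℝ≥0∞) ^ r * ∑' k : ℤ, (2:ℝ≥0∞) ^ (k:ℤ) *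
              (∑' n : ℕ, a (k + (n:ℤ))) ^ (r / q) := by
            rw [← ENNReal.tsum_mul_left]
            exact tsum_congr fun k => by ring
        _ ≤ (2:ℝ≥0∞) ^ r * (C * ∑' j : ℤ, (2:ℝ≥0∞) ^ (j:ℤ) * a j ^ (r / q)) :=
            mul_le_mul_right (hC a) _
        _ ≤ (2:ℝ≥0∞) ^ r * (C * ∑' j : ℤ, (2:ℝ≥0∞) ^ (j:ℤ) *
              ((2:ℝ≥0∞) ^ (r / q) * (A j ^ (r / q) + Wf j ^ (r / q) * B j ^ r))) := by
            refine mul_le_mul_right (mul_le_mul_right (ENNReal.tsum_le_tsum fun j =>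
              mul_le_mul_right ?_ _) _) _
            calc a j ^ (r / q)
                ≤ (2:ℝ≥0∞) ^ (r / q) * (A j ^ (r / q) + (Wf j * B j ^ q) ^ (r / q)) :=
                  aux_add_rpow_le _ _ hp.le
              _ = (2:ℝ≥0∞) ^ (r / q) * (A j ^ (r / q) + Wf j ^ (r / q) * B j ^ r) := by
                  rw [hWB_rpow j]
        _ = ((2:ℝ≥0∞) ^ r * C * (2:ℝ≥0∞) ^ (r / q)) *
              ((∑' j : ℤ, (2:ℝ≥0∞) ^ (j:ℤ) * A j ^ (r / q))
                + ∑' j : ℤ, (2:ℝ≥0∞) ^ (j:ℤ) * (Wf j ^ (r / q) * B j ^ r)) := by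
            rw [hsplitsum]; ring
        _ = ((2:ℝ≥0∞) ^ r * C * (2:ℝ≥0∞) ^ (r / q)) *
              ((∑' k : ℤ, (2:ℝ≥0∞) ^ (k:ℤ) * A k ^ (r / q))
                + ∑' k : ℤ, (2:ℝ≥0∞) ^ (k:ℤ) * Wf k ^ (r / q) * B k ^ r) := by
            congr 2
            exact tsum_congr fun k => (mul_assoc _ _ _).symm
    show (∫⁻ t in Set.Ioi (0:ℝ), F t ^ (r / q) * u t) ^ (1 / r)
        ≤ ((2:ℝ≥0∞) ^ r * C * (2:ℝ≥0∞) ^ (r / q)) ^ (1 / r) * (2:ℝ≥0∞) ^ (1 / r) *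
          ((∑' k : ℤ, (2:ℝ≥0∞) ^ (k:ℤ) * A k ^ (r / q)) ^ (1 / r)
            + (∑' k : ℤ, (2:ℝ≥0∞) ^ (k:ℤ) * Wf k ^ (r / q) * B k ^ r) ^ (1 / r))
    calc (∫⁻ t in Set.Ioi (0:ℝ), F t ^ (r / q) * u t) ^ (1 / r)
        ≤ (((2:ℝ≥0∞) ^ r * C * (2:ℝ≥0∞) ^ (r / q)) *
            ((∑' k : ℤ, (2:ℝ≥0∞) ^ (k:ℤ) * A k ^ (r / q))
              + ∑' k : ℤ, (2:ℝ≥0∞) ^ (k:ℤ) * Wf k ^ (r / q) * B k ^ r)) ^ (1 / r) :=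
          ENNReal.rpow_le_rpow hIle (by positivity)
      _ = ((2:ℝ≥0∞) ^ r * C * (2:ℝ≥0∞) ^ (r / q)) ^ (1 / r) *
            ((∑' k : ℤ, (2:ℝ≥0∞) ^ (k:ℤ) * A k ^ (r / q))
              + ∑' k : ℤ, (2:ℝ≥0∞) ^ (k:ℤ) * Wf k ^ (r / q) * B k ^ r) ^ (1 / r) :=
          ENNReal.mul_rpow_of_nonneg _ _ (by positivity)
      _ ≤ ((2:ℝ≥0∞) ^ r * C * (2:ℝ≥0∞) ^ (r / q)) ^ (1 / r) *
            ((2:ℝ≥0∞) ^ (1 / r) *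
              ((∑' k : ℤ, (2:ℝ≥0∞) ^ (k:ℤ) * A k ^ (r / q)) ^ (1 / r)
                + (∑' k : ℤ, (2:ℝ≥0∞) ^ (k:ℤ) * Wf k ^ (r / q) * B k ^ r) ^ (1 / r))) :=
          mul_le_mul_right (aux_add_rpow_le _ _ (by positivity)) _
      _ = _ := by rw [← mul_assoc]
end

section
/- Let 0 < q, r < ∞, u, v, w weights on (0,∞), and {x_k} a covering sequence with ∫_0^{x_k} u = 2^k. Then, uniformly in nonnegative measurable h, L(h) := (∫_0^∞ (∫_x^∞ (∫_t^∞ h)^q w(t) dt)^{r/q} u(x) dx)^{1/r} ≈ ‖{2^{k/r} (∫_{x_k}^{x_{k+1}} (∫_s^{x_{k+1}} h)^q w(s) ds)^{1/q}}‖_{ℓ^r} + (∫_0^∞ u(t) sup_{s>t} (∫_t^s w)^{r/q} (∫_s^∞ h)^r dt)^{1/r}. -/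
open MeasureTheory ENNReal Set

namespace DiscAux

lemma two_ne_top : (2:ℝ≥0∞) ≠ ⊤ := ofNat_ne_top

lemma rpow_add_le (a b : ℝ≥0∞) {p : ℝ} (hp : 0 ≤ p) :
    (a + b) ^ p ≤ 2 ^ p * (a ^ p + b ^ p) := by
  have h1 : a + b ≤ 2 * (a ⊔ b) := by
    rw [two_mul]
    exact add_le_add le_sup_left le_sup_right
  calc (a + b) ^ p ≤ (2 * (a ⊔ b)) ^ p := ENNReal.rpow_le_rpow h1 hp
    _ = 2 ^ p * (a ⊔ b) ^ p := ENNReal.mul_rpow_of_nonneg _ _ hp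
    _ ≤ 2 ^ p * (a ^ p + b ^ p) := by
        gcongr
        rcases le_total a b with hab | hab
        · rw [sup_eq_right.2 hab]; exact le_add_self
        · rw [sup_eq_left.2 hab]; exact self_le_add_right _ _

lemma rpow_sum_le (a b : ℝ≥0∞) {p : ℝ} (hp : 0 ≤ p) :
    (a + b) ^ p ≤ 2 ^ p * (a ^ p + b ^ p) := rpow_add_le a b hp

/-- shift a sum over `{j : k ≤ j}` to a sum over ℕ -/
lemma tsum_shift_up (f : ℤ → ℝ≥0∞) (k : ℤ) :
    (∑' j : ℤ, if k ≤ j then f j else 0) = ∑' n : ℕ, f (k + n) := by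
  have hinj : Function.Injective (fun n : ℕ => k + (n:ℤ)) := by
    intro m n hmn
    simpa using hmn
  have hsupp : Function.support (fun j : ℤ => if k ≤ j then f j else 0)
      ⊆ Set.range (fun n : ℕ => k + (n:ℤ)) := by
    intro j hj
    by_cases hkj : k ≤ j
    · exact ⟨(j - k).toNat, by simp [Int.toNat_of_nonneg (sub_nonneg.2 hkj)]⟩
    · simp [hkj] at hj
  rw [← hinj.tsum_eq hsupp]
  congr 1
  ext n
  simp [Int.le_add_of_nonneg_right (Int.ofNat_nonneg n)]

/-- shift a sum over `{j : j ≤ k}` to a sum over ℕ -/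
lemma tsum_shift_down (f : ℤ → ℝ≥0∞) (k : ℤ) :
    (∑' j : ℤ, if j ≤ k then f j else 0) = ∑' n : ℕ, f (k - n) := by
  have hinj : Function.Injective (fun n : ℕ => k - (n:ℤ)) := by
    intro m n hmn
    simp only [sub_right_inj, Nat.cast_inj] at hmn
    omega
  have hsupp : Function.support (fun j : ℤ => if j ≤ k then f j else 0)
      ⊆ Set.range (fun n : ℕ => k - (n:ℤ)) := by
    intro j hj
    by_cases hkj : j ≤ k
    · exact ⟨(k - j).toNat, by simp [Int.toNat_of_nonneg (sub_nonneg.2 hkj)]⟩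
    · simp [hkj] at hj
  rw [← hinj.tsum_eq hsupp]
  congr 1
  ext n
  simp [Int.sub_le_self _ (Int.ofNat_nonneg n)]

lemma geom_lt_top {s : ℝ} (hs : 0 < s) : (∑' n : ℕ, ((2:ℝ≥0∞) ^ (-s)) ^ n) < ⊤ := by
  rw [ENNReal.tsum_geometric]
  rw [ENNReal.inv_lt_top, tsub_pos_iff_lt]
  exact ENNReal.rpow_lt_one_of_one_lt_of_neg (by norm_num) (neg_neg_of_pos hs)

lemma geom_pow (s : ℝ) (n : ℕ) : (2:ℝ≥0∞) ^ (-(n:ℝ) * s) = ((2:ℝ≥0∞) ^ (-s)) ^ n := by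
  rw [show -(n:ℝ) * s = (-s) * (n:ℝ) by ring, ENNReal.rpow_mul, ENNReal.rpow_natCast]

end DiscAux

namespace DiscAux

lemma two_rpow_add (y z : ℝ) : (2:ℝ≥0∞) ^ (y + z) = 2 ^ y * 2 ^ z :=
  ENNReal.rpow_add y z (by norm_num) ofNat_ne_top

lemma two_rpow_ne_top (y : ℝ) : (2:ℝ≥0∞) ^ y ≠ ⊤ := by
  simp [ENNReal.rpow_eq_top_iff]

lemma ite_mul_zero (c : Prop) [Decidable c] (α β : ℝ≥0∞) :
    (if c then α * β else 0) = α * (if c then β else 0) := by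
  split_ifs <;> simp

lemma discrete_hardy (ρ : ℝ) (hρ : 0 < ρ) :
    ∃ K : ℝ≥0∞, K < ⊤ ∧ ∀ a : ℤ → ℝ≥0∞,
      (∑' k : ℤ, 2 ^ ((k : ℤ):ℝ) * (∑' j : ℤ, if k ≤ j then a j else 0) ^ ρ)
        ≤ K * ∑' j : ℤ, 2 ^ ((j : ℤ):ℝ) * a j ^ ρ := by
  set s : ℝ := 1 / (2 * ρ) with hs_def
  have hs : 0 < s := by positivity
  set C : ℝ≥0∞ := ∑' n : ℕ, ((2:ℝ≥0∞) ^ (-s)) ^ n with hC_def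
  have hC : C < ⊤ := geom_lt_top hs
  set c' : ℝ≥0∞ := ∑' n : ℕ, ((2:ℝ≥0∞) ^ (-(1/2 : ℝ))) ^ n with hc'_def
  have hc' : c' < ⊤ := geom_lt_top (by norm_num)
  refine ⟨C ^ ρ * c', ENNReal.mul_lt_top
    (ENNReal.rpow_lt_top_of_nonneg hρ.le hC.ne) hc', fun a => ?_⟩
  set T : ℤ → ℝ≥0∞ :=
    fun k => ∑' j : ℤ, if k ≤ j then 2 ^ (((j:ℝ) - (k:ℝ))/2) * a j ^ ρ else 0 with hT_def
  have claim1 : ∀ k : ℤ, (∑' j : ℤ, if k ≤ j then a j else 0) ≤ C * (T k) ^ (1/ρ) := by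
    intro k
    have hjle : ∀ j : ℤ, k ≤ j →
        a j ≤ 2 ^ (-(((j:ℝ) - (k:ℝ))) * s) * (T k) ^ (1/ρ) := by
      intro j hj
      have h1 : 2 ^ (((j:ℝ) - (k:ℝ))/2) * a j ^ ρ ≤ T k := by
        simpa [hj] using
          ENNReal.le_tsum (f := fun j : ℤ =>
            if k ≤ j then (2:ℝ≥0∞) ^ (((j:ℝ) - (k:ℝ))/2) * a j ^ ρ else 0) j
      have h2 : a j ^ ρ ≤ 2 ^ (-(((j:ℝ) - (k:ℝ))/2)) * T k := by
        have := mul_le_mul_right h1 ((2:ℝ≥0∞) ^ (-(((j:ℝ) - (k:ℝ))/2)))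
        calc a j ^ ρ
            = 2 ^ (-(((j:ℝ) - (k:ℝ))/2)) * (2 ^ (((j:ℝ) - (k:ℝ))/2) * a j ^ ρ) := by
              rw [← mul_assoc, ← two_rpow_add]
              simp
          _ ≤ 2 ^ (-(((j:ℝ) - (k:ℝ))/2)) * T k := this
      calc a j = (a j ^ ρ) ^ (1/ρ) := by
            rw [← ENNReal.rpow_mul, mul_one_div_cancel hρ.ne', ENNReal.rpow_one]
        _ ≤ (2 ^ (-(((j:ℝ) - (k:ℝ))/2)) * T k) ^ (1/ρ) :=
            ENNReal.rpow_le_rpow h2 (by positivity)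
        _ = 2 ^ (-(((j:ℝ) - (k:ℝ))) * s) * (T k) ^ (1/ρ) := by
            rw [ENNReal.mul_rpow_of_nonneg _ _ (by positivity : (0:ℝ) ≤ 1/ρ),
              ← ENNReal.rpow_mul]
            congr 2
            rw [hs_def]
            ring
    calc (∑' j : ℤ, if k ≤ j then a j else 0)
        ≤ ∑' j : ℤ, if k ≤ j then 2 ^ (-(((j:ℝ) - (k:ℝ))) * s) * (T k) ^ (1/ρ) else 0 := by
          refine ENNReal.tsum_le_tsum fun j => ?_
          split_ifs with hj
          · exact hjle j hj
          · exact le_rfl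
      _ = (∑' j : ℤ, if k ≤ j then (2:ℝ≥0∞) ^ (-(((j:ℝ) - (k:ℝ))) * s) else 0)
            * (T k) ^ (1/ρ) := by
          rw [← ENNReal.tsum_mul_right]
          congr 1; ext j; split_ifs <;> simp
      _ = C * (T k) ^ (1/ρ) := by
          congr 1
          rw [tsum_shift_up (fun j : ℤ => (2:ℝ≥0∞) ^ (-(((j:ℝ) - (k:ℝ))) * s)) k]
          rw [hC_def]
          refine tsum_congr fun n => ?_
          rw [← geom_pow]
          have he : -(((((k + (n:ℤ)):ℤ):ℝ)) - (k:ℝ)) * s = -(n:ℝ) * s := by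
            push_cast; ring
          rw [he]
  have claim2 : ∀ k : ℤ,
      (∑' j : ℤ, if k ≤ j then a j else 0) ^ ρ ≤ C ^ ρ * T k := by
    intro k
    calc (∑' j : ℤ, if k ≤ j then a j else 0) ^ ρ
        ≤ (C * (T k) ^ (1/ρ)) ^ ρ := ENNReal.rpow_le_rpow (claim1 k) hρ.le
      _ = C ^ ρ * T k := by
          rw [ENNReal.mul_rpow_of_nonneg _ _ hρ.le, ← ENNReal.rpow_mul,
            one_div_mul_cancel hρ.ne', ENNReal.rpow_one]
  calc (∑' k : ℤ, 2 ^ ((k : ℤ):ℝ) * (∑' j : ℤ, if k ≤ j then a j else 0) ^ ρ)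
      ≤ ∑' k : ℤ, 2 ^ ((k : ℤ):ℝ) * (C ^ ρ * T k) := by
        exact ENNReal.tsum_le_tsum fun k => mul_le_mul_right (claim2 k) _
    _ = C ^ ρ * ∑' k : ℤ, ∑' j : ℤ,
          (if k ≤ j then 2 ^ (((j:ℝ) + (k:ℝ))/2) * a j ^ ρ else 0) := by
        rw [← ENNReal.tsum_mul_left]
        refine tsum_congr fun k => ?_
        rw [hT_def, mul_left_comm, ← ENNReal.tsum_mul_left]
        congr 1
        refine tsum_congr fun j => ?_
        split_ifs with hkj
        · rw [← mul_assoc, ← two_rpow_add]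
          have he : (k:ℝ) + ((j:ℝ) - (k:ℝ))/2 = ((j:ℝ) + (k:ℝ))/2 := by ring
          rw [he]
        · simp
    _ = C ^ ρ * ∑' j : ℤ, ∑' k : ℤ,
          (if k ≤ j then 2 ^ (((j:ℝ) + (k:ℝ))/2) * a j ^ ρ else 0) := by
        rw [ENNReal.tsum_comm]
    _ ≤ C ^ ρ * ∑' j : ℤ, c' * (2 ^ ((j : ℤ):ℝ) * a j ^ ρ) := by
        gcongr with j
        have heq : (∑' k : ℤ, (if k ≤ j then
            (2:ℝ≥0∞) ^ (((j:ℝ) + (k:ℝ))/2) * a j ^ ρ else 0))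
            = ∑' n : ℕ, ((2:ℝ≥0∞) ^ (-(1/2:ℝ))) ^ n * (2 ^ ((j:ℝ)) * a j ^ ρ) := by
          rw [tsum_shift_down (fun k : ℤ =>
            (2:ℝ≥0∞) ^ (((j:ℝ) + (k:ℝ))/2) * a j ^ ρ) j]
          refine tsum_congr fun n => ?_
          rw [← geom_pow, ← mul_assoc, ← two_rpow_add]
          have he : -(n:ℝ) * (1/2) + (j:ℝ) = ((j:ℝ) + ((((j - (n:ℤ)):ℤ):ℝ)))/2 := by
            push_cast; ring
          rw [he]
        rw [heq, ENNReal.tsum_mul_right]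
    _ = C ^ ρ * c' * ∑' j : ℤ, 2 ^ ((j : ℤ):ℝ) * a j ^ ρ := by
        rw [ENNReal.tsum_mul_left, mul_assoc]

end DiscAux

namespace DiscAux

lemma pairwise_disj (x : ℤ → ℝ) (hx : StrictMono x) :
    Pairwise (Function.onFun Disjoint fun k : ℤ => Ioc (x k) (x (k+1))) := by
  intro i j hij
  rcases hij.lt_or_gt with hlt | hlt
  · exact Set.Ioc_disjoint_Ioc.mpr (le_trans (min_le_left _ _)
      (le_trans (hx.monotone (by omega)) (le_max_right _ _)))
  · exact Set.Ioc_disjoint_Ioc.mpr (le_trans (min_le_right _ _)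
      (le_trans (hx.monotone (by omega)) (le_max_left _ _)))

lemma lint_Ioi_zero (x : ℤ → ℝ) (hx : StrictMono x)
    (hcov : (⋃ k : ℤ, Ioc (x k) (x (k + 1))) = Ioi (0:ℝ)) (f : ℝ → ℝ≥0∞) :
    ∫⁻ t in Ioi (0:ℝ), f t = ∑' k : ℤ, ∫⁻ t in Ioc (x k) (x (k+1)), f t := by
  rw [← hcov, lintegral_iUnion (fun k => measurableSet_Ioc) (pairwise_disj x hx) f]

lemma lint_Ioi_xk (x : ℤ → ℝ) (hx : StrictMono x) (hxpos : ∀ k, 0 < x k)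
    (hcov : (⋃ k : ℤ, Ioc (x k) (x (k + 1))) = Ioi (0:ℝ)) (f : ℝ → ℝ≥0∞) (k : ℤ) :
    ∫⁻ t in Ioi (x k), f t
      = ∑' j : ℤ, if k ≤ j then ∫⁻ t in Ioc (x j) (x (j+1)), f t else 0 := by
  set s : ℤ → Set ℝ := fun j => if k ≤ j then Ioc (x j) (x (j+1)) else ∅ with hs_def
  have hmeas : ∀ j, MeasurableSet (s j) := by
    intro j; simp only [hs_def]; split_ifs <;> simp [measurableSet_Ioc]
  have hsub : ∀ j, s j ⊆ Ioc (x j) (x (j+1)) := by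
    intro j; simp only [hs_def]; split_ifs <;> simp
  have hdisj : Pairwise (Function.onFun Disjoint s) := fun i j hij =>
    ((pairwise_disj x hx hij).mono (hsub i) (hsub j))
  have hunion : (⋃ j, s j) = Ioi (x k) := by
    ext t
    simp only [mem_iUnion, mem_Ioi]
    constructor
    · rintro ⟨j, htj⟩
      have := hsub j htj
      by_cases hkj : k ≤ j
      · exact lt_of_le_of_lt (hx.monotone hkj) this.1
      · rw [hs_def] at htj; simp [hkj] at htj
    · intro ht
      have ht0 : t ∈ Ioi (0:ℝ) := lt_trans (hxpos k) ht
      rw [← hcov] at ht0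
      obtain ⟨S, ⟨j, rfl⟩, htS⟩ := ht0
      have hkj : k ≤ j := by
        by_contra hc
        push_neg at hc
        exact absurd (lt_of_le_of_lt (htS.2.trans (hx.monotone (by omega : j + 1 ≤ k))) ht)
          (lt_irrefl t)
      exact ⟨j, by rw [hs_def]; simpa [hkj] using htS⟩
  rw [← hunion, lintegral_iUnion hmeas hdisj f]
  refine tsum_congr fun j => ?_
  simp only [hs_def]
  split_ifs with hkj <;> simp

lemma u_piece (x : ℤ → ℝ) (hx : StrictMono x) (hxpos : ∀ k, 0 < x k)
    (u : ℝ → ℝ≥0∞) (hxu : ∀ k : ℤ, (∫⁻ t in Ioc 0 (x k), u t) = 2 ^ k) (k : ℤ) :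
    ∫⁻ t in Ioc (x k) (x (k+1)), u t = 2 ^ k := by
  have hsplit : Ioc (0:ℝ) (x (k+1)) = Ioc 0 (x k) ∪ Ioc (x k) (x (k+1)) :=
    (Ioc_union_Ioc_eq_Ioc (hxpos k).le (hx (by omega : k < k + 1)).le).symm
  have hadd : (2:ℝ≥0∞) ^ (k+1) = 2 ^ k + ∫⁻ t in Ioc (x k) (x (k+1)), u t := by
    rw [← hxu (k+1), hsplit, lintegral_union measurableSet_Ioc
      (Set.Ioc_disjoint_Ioc.mpr (le_trans (min_le_left _ _) (le_max_right _ _))),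
      hxu k]
  have h2 : (2:ℝ≥0∞) ^ (k+1) = 2 ^ k + 2 ^ k := by
    rw [ENNReal.zpow_add (by norm_num) ofNat_ne_top k 1]
    rw [zpow_one, mul_two]
  rw [h2] at hadd
  exact ((ENNReal.add_right_inj (ENNReal.zpow_lt_top (by norm_num) ofNat_ne_top k).ne).mp
    hadd.symm)

end DiscAux

open DiscAux

/-- discretization, supremal form:
`L(h) ≈ ‖{2^{k/r}(∫_{x_k}^{x_{k+1}}(∫_s^{x_{k+1}} h)^q w ds)^{1/q}}‖_{ℓ^r}
  + (∫_0^∞ u(t) sup_{s>t} (∫_t^s w)^{r/q} (∫_s^∞ h)^r dt)^{1/r}`,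
uniformly in nonnegative measurable `h`. -/
theorem lhs_discretization_sum_plus_sup
    (q r : ℝ) (hq : 0 < q) (hr : 0 < r)
    (u v w : ℝ → ℝ≥0∞) (hu : IsWeight u) (hv : IsWeight v) (hw : IsWeight w)
    (x : ℤ → ℝ) (hx : StrictMono x) (hxpos : ∀ k, 0 < x k)
    (hxu : ∀ k : ℤ, (∫⁻ t in Set.Ioc 0 (x k), u t) = 2 ^ k)
    (hcov : (⋃ k : ℤ, Set.Ioc (x k) (x (k + 1))) = Set.Ioi (0 : ℝ)) :
    ∃ c₁ c₂ : ℝ≥0∞, 0 < c₁ ∧ c₂ < ∞ ∧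
      ∀ h : ℝ → ℝ≥0∞, Measurable h →
        (c₁ * ((∑' k : ℤ, (2 : ℝ≥0∞) ^ (k : ℤ) *
                  (∫⁻ s in Set.Ioc (x k) (x (k + 1)),
                    (∫⁻ y in Set.Ioc s (x (k + 1)), h y) ^ q * w s) ^ (r / q)) ^ (1 / r)
              + (∫⁻ t in Set.Ioi (0 : ℝ),
                  u t * ⨆ s ∈ Set.Ioi t,
                    (∫⁻ y in Set.Ioc t s, w y) ^ (r / q) *
                      (∫⁻ y in Set.Ioi s, h y) ^ r) ^ (1 / r))
            ≤ (∫⁻ t in Set.Ioi (0 : ℝ),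
                (∫⁻ s in Set.Ioi t, (∫⁻ y in Set.Ioi s, h y) ^ q * w s) ^ (r / q)
                  * u t) ^ (1 / r)) ∧
        ((∫⁻ t in Set.Ioi (0 : ℝ),
                (∫⁻ s in Set.Ioi t, (∫⁻ y in Set.Ioi s, h y) ^ q * w s) ^ (r / q)
                  * u t) ^ (1 / r)
            ≤ c₂ * ((∑' k : ℤ, (2 : ℝ≥0∞) ^ (k : ℤ) *
                  (∫⁻ s in Set.Ioc (x k) (x (k + 1)),
                    (∫⁻ y in Set.Ioc s (x (k + 1)), h y) ^ q * w s) ^ (r / q)) ^ (1 / r)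
              + (∫⁻ t in Set.Ioi (0 : ℝ),
                  u t * ⨆ s ∈ Set.Ioi t,
                    (∫⁻ y in Set.Ioc t s, w y) ^ (r / q) *
                      (∫⁻ y in Set.Ioi s, h y) ^ r) ^ (1 / r))) := by
  classical
  obtain ⟨hu_meas, -⟩ := hu
  obtain ⟨hw_meas, -⟩ := hw
  have hρ : 0 < r / q := div_pos hr hq
  have hqρ : q * (r / q) = r := by field_simp
  have hrinv : (0:ℝ) ≤ 1 / r := by positivity
  obtain ⟨K, hK, hKle⟩ := DiscAux.discrete_hardy (r / q) hρ
  set M : ℝ≥0∞ := 2 ^ (q * (r / q)) * K * 2 ^ (r / q) * 2 with hM_def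
  have hM : M ≠ ⊤ := by
    rw [hM_def]
    exact ENNReal.mul_ne_top (ENNReal.mul_ne_top (ENNReal.mul_ne_top
      (DiscAux.two_rpow_ne_top _) hK.ne) (DiscAux.two_rpow_ne_top _)) ofNat_ne_top
  have hc1top : ((2:ℝ≥0∞) ^ (1 / r) + 1) ≠ ⊤ :=
    ENNReal.add_ne_top.mpr ⟨DiscAux.two_rpow_ne_top _, one_ne_top⟩
  refine ⟨((2:ℝ≥0∞) ^ (1 / r) + 1)⁻¹, M ^ (1 / r) * 2 ^ (1 / r),
    ENNReal.inv_pos.mpr hc1top,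
    ENNReal.mul_lt_top (ENNReal.rpow_lt_top_of_nonneg hrinv hM)
      (ENNReal.rpow_lt_top_of_nonneg hrinv ofNat_ne_top),
    fun h hh => ?_⟩
  set A : ℝ≥0∞ := ∑' k : ℤ, (2 : ℝ≥0∞) ^ (k : ℤ) *
      (∫⁻ s in Set.Ioc (x k) (x (k + 1)),
        (∫⁻ y in Set.Ioc s (x (k + 1)), h y) ^ q * w s) ^ (r / q) with hA_def
  set B : ℝ≥0∞ := ∫⁻ t in Set.Ioi (0 : ℝ),
      u t * ⨆ s ∈ Set.Ioi t,
        (∫⁻ y in Set.Ioc t s, w y) ^ (r / q) *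
          (∫⁻ y in Set.Ioi s, h y) ^ r with hB_def
  set Lr : ℝ≥0∞ := ∫⁻ t in Set.Ioi (0 : ℝ),
      (∫⁻ s in Set.Ioi t, (∫⁻ y in Set.Ioi s, h y) ^ q * w s) ^ (r / q)
        * u t with hLr_def
  -- measurability facts
  have hHanti : Antitone (fun s : ℝ => ∫⁻ y in Set.Ioi s, h y) :=
    fun s₁ s₂ h12 => lintegral_mono_set (Ioi_subset_Ioi h12)
  have hHmeas : Measurable (fun s : ℝ => ∫⁻ y in Set.Ioi s, h y) := hHanti.measurable
  have hinteg_meas : Measurable (fun s : ℝ => (∫⁻ y in Set.Ioi s, h y) ^ q * w s) :=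
    (hHmeas.pow_const q).mul hw_meas
  have hFanti : Antitone (fun t : ℝ => ∫⁻ s in Set.Ioi t, (∫⁻ y in Set.Ioi s, h y) ^ q * w s) :=
    fun t₁ t₂ h12 => lintegral_mono_set (Ioi_subset_Ioi h12)
  have hFmeas : Measurable
      (fun t : ℝ => ∫⁻ s in Set.Ioi t, (∫⁻ y in Set.Ioi s, h y) ^ q * w s) := hFanti.measurable
  have hGanti : ∀ c : ℝ, Antitone (fun s : ℝ => ∫⁻ y in Set.Ioc s c, h y) :=
    fun c s₁ s₂ h12 => lintegral_mono_set (Ioc_subset_Ioc_left h12)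
  have hGmeas : ∀ c : ℝ, Measurable (fun s : ℝ => ∫⁻ y in Set.Ioc s c, h y) :=
    fun c => (hGanti c).measurable
  have hsup_anti : Antitone (fun t : ℝ => ⨆ s ∈ Set.Ioi t,
      (∫⁻ y in Set.Ioc t s, w y) ^ (r / q) * (∫⁻ y in Set.Ioi s, h y) ^ r) := by
    intro t₁ t₂ h12
    refine iSup₂_le fun s hs => ?_
    refine le_trans ?_ (le_iSup₂ (f := fun s (_ : s ∈ Set.Ioi t₁) =>
      (∫⁻ y in Set.Ioc t₁ s, w y) ^ (r / q) * (∫⁻ y in Set.Ioi s, h y) ^ r)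
      s (lt_of_le_of_lt h12 hs))
    exact mul_le_mul_left
      (ENNReal.rpow_le_rpow (lintegral_mono_set (Ioc_subset_Ioc_left h12)) hρ.le) _
  have hsup_meas : Measurable (fun t : ℝ => ⨆ s ∈ Set.Ioi t,
      (∫⁻ y in Set.Ioc t s, w y) ^ (r / q) * (∫⁻ y in Set.Ioi s, h y) ^ r) :=
    hsup_anti.measurable
  -- ====================== LOWER BOUND ======================
  have hBle : B ≤ Lr := by
    rw [hB_def, hLr_def]
    refine lintegral_mono fun t => ?_
    rw [mul_comm]
    refine mul_le_mul_left (iSup₂_le fun s hs => ?_) (u t)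
    have h1 : (∫⁻ y in Set.Ioc t s, w y) * (∫⁻ y in Set.Ioi s, h y) ^ q
        ≤ ∫⁻ s' in Set.Ioi t, (∫⁻ y in Set.Ioi s', h y) ^ q * w s' := by
      calc (∫⁻ y in Set.Ioc t s, w y) * (∫⁻ y in Set.Ioi s, h y) ^ q
          = ∫⁻ y in Set.Ioc t s, (∫⁻ y' in Set.Ioi s, h y') ^ q * w y := by
            rw [lintegral_const_mul _ hw_meas]; ring
        _ ≤ ∫⁻ y in Set.Ioc t s, (∫⁻ y' in Set.Ioi y, h y') ^ q * w y :=
            setLIntegral_mono hinteg_meas (fun y hy => mul_le_mul_left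
              (ENNReal.rpow_le_rpow (lintegral_mono_set (Ioi_subset_Ioi hy.2)) hq.le) _)
        _ ≤ ∫⁻ s' in Set.Ioi t, (∫⁻ y in Set.Ioi s', h y) ^ q * w s' :=
            lintegral_mono_set Ioc_subset_Ioi_self
    calc (∫⁻ y in Set.Ioc t s, w y) ^ (r / q) * (∫⁻ y in Set.Ioi s, h y) ^ r
        = ((∫⁻ y in Set.Ioc t s, w y) * (∫⁻ y in Set.Ioi s, h y) ^ q) ^ (r / q) := by
          rw [ENNReal.mul_rpow_of_nonneg _ _ hρ.le, ← ENNReal.rpow_mul, hqρ]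
      _ ≤ (∫⁻ s' in Set.Ioi t, (∫⁻ y in Set.Ioi s', h y) ^ q * w s') ^ (r / q) :=
          ENNReal.rpow_le_rpow h1 hρ.le
  have hAle : A ≤ 2 * Lr := by
    have hpiece : ∀ k : ℤ, (2:ℝ≥0∞) ^ (k : ℤ) *
        (∫⁻ s in Set.Ioc (x (k+1)) (x (k+1+1)),
          (∫⁻ y in Set.Ioc s (x (k+1+1)), h y) ^ q * w s) ^ (r / q)
        ≤ ∫⁻ t in Set.Ioc (x k) (x (k+1)),
            (∫⁻ s in Set.Ioi t, (∫⁻ y in Set.Ioi s, h y) ^ q * w s) ^ (r / q) * u t := by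
      intro k
      have hcon : ∀ t ∈ Set.Ioc (x k) (x (k+1)),
          (∫⁻ s in Set.Ioc (x (k+1)) (x (k+1+1)),
            (∫⁻ y in Set.Ioc s (x (k+1+1)), h y) ^ q * w s) ^ (r / q) * u t
          ≤ (∫⁻ s in Set.Ioi t, (∫⁻ y in Set.Ioi s, h y) ^ q * w s) ^ (r / q) * u t := by
        intro t ht
        refine mul_le_mul_left (ENNReal.rpow_le_rpow ?_ hρ.le) _
        calc ∫⁻ s in Set.Ioc (x (k+1)) (x (k+1+1)),
              (∫⁻ y in Set.Ioc s (x (k+1+1)), h y) ^ q * w s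
            ≤ ∫⁻ s in Set.Ioc (x (k+1)) (x (k+1+1)),
                (∫⁻ y in Set.Ioi s, h y) ^ q * w s :=
              setLIntegral_mono hinteg_meas (fun s₀ _ => mul_le_mul_left
                (ENNReal.rpow_le_rpow (lintegral_mono_set Ioc_subset_Ioi_self) hq.le) _)
          _ ≤ ∫⁻ s in Set.Ioi t, (∫⁻ y in Set.Ioi s, h y) ^ q * w s :=
              lintegral_mono_set (fun s₀ hs₀ => lt_of_le_of_lt ht.2 hs₀.1)
      calc (2:ℝ≥0∞) ^ (k : ℤ) * (∫⁻ s in Set.Ioc (x (k+1)) (x (k+1+1)),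
              (∫⁻ y in Set.Ioc s (x (k+1+1)), h y) ^ q * w s) ^ (r / q)
          = ∫⁻ t in Set.Ioc (x k) (x (k+1)), (∫⁻ s in Set.Ioc (x (k+1)) (x (k+1+1)),
              (∫⁻ y in Set.Ioc s (x (k+1+1)), h y) ^ q * w s) ^ (r / q) * u t := by
            rw [lintegral_const_mul _ hu_meas, DiscAux.u_piece x hx hxpos u hxu k]
            ring
        _ ≤ _ := setLIntegral_mono ((hFmeas.pow_const _).mul hu_meas) hcon
    have hLr_sum : Lr = ∑' k : ℤ, ∫⁻ t in Set.Ioc (x k) (x (k+1)),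
        (∫⁻ s in Set.Ioi t, (∫⁻ y in Set.Ioi s, h y) ^ q * w s) ^ (r / q) * u t := by
      rw [hLr_def, DiscAux.lint_Ioi_zero x hx hcov]
    have hresum : A = ∑' k : ℤ, (2:ℝ≥0∞) ^ ((k:ℤ)+1) *
        (∫⁻ s in Set.Ioc (x (k+1)) (x (k+1+1)),
          (∫⁻ y in Set.Ioc s (x (k+1+1)), h y) ^ q * w s) ^ (r / q) := by
      rw [hA_def]
      exact ((Equiv.addRight (1:ℤ)).tsum_eq (fun k : ℤ => (2 : ℝ≥0∞) ^ (k : ℤ) *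
        (∫⁻ s in Set.Ioc (x k) (x (k + 1)),
          (∫⁻ y in Set.Ioc s (x (k + 1)), h y) ^ q * w s) ^ (r / q))).symm
    calc A = ∑' k : ℤ, 2 * ((2:ℝ≥0∞) ^ (k:ℤ) *
          (∫⁻ s in Set.Ioc (x (k+1)) (x (k+1+1)),
            (∫⁻ y in Set.Ioc s (x (k+1+1)), h y) ^ q * w s) ^ (r / q)) := by
          rw [hresum]
          refine tsum_congr fun k => ?_
          rw [ENNReal.zpow_add (by norm_num) ofNat_ne_top k 1, zpow_one]
          ring
      _ = 2 * ∑' k : ℤ, (2:ℝ≥0∞) ^ (k:ℤ) *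
          (∫⁻ s in Set.Ioc (x (k+1)) (x (k+1+1)),
            (∫⁻ y in Set.Ioc s (x (k+1+1)), h y) ^ q * w s) ^ (r / q) :=
          ENNReal.tsum_mul_left
      _ ≤ 2 * ∑' k : ℤ, ∫⁻ t in Set.Ioc (x k) (x (k+1)),
          (∫⁻ s in Set.Ioi t, (∫⁻ y in Set.Ioi s, h y) ^ q * w s) ^ (r / q) * u t :=
          mul_le_mul_right (ENNReal.tsum_le_tsum hpiece) 2
      _ = 2 * Lr := by rw [hLr_sum]
  refine ⟨?_, ?_⟩
  · -- lower bound
    calc ((2:ℝ≥0∞) ^ (1 / r) + 1)⁻¹ * (A ^ (1 / r) + B ^ (1 / r))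
        ≤ ((2:ℝ≥0∞) ^ (1 / r) + 1)⁻¹ * ((2 * Lr) ^ (1 / r) + Lr ^ (1 / r)) :=
          mul_le_mul_right (add_le_add (ENNReal.rpow_le_rpow hAle hrinv)
            (ENNReal.rpow_le_rpow hBle hrinv)) _
      _ = ((2:ℝ≥0∞) ^ (1 / r) + 1)⁻¹ * (((2:ℝ≥0∞) ^ (1 / r) + 1) * Lr ^ (1 / r)) := by
          rw [ENNReal.mul_rpow_of_nonneg _ _ hrinv]
          ring
      _ = Lr ^ (1 / r) := by
          rw [← mul_assoc, ENNReal.inv_mul_cancel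
            ((one_pos.trans_le le_add_self).ne' ) hc1top, one_mul]
  · -- upper bound
    set a : ℤ → ℝ≥0∞ := fun j =>
      (∫⁻ s in Set.Ioc (x j) (x (j+1)), (∫⁻ y in Set.Ioc s (x (j+1)), h y) ^ q * w s)
        + (∫⁻ y in Set.Ioi (x (j+1)), h y) ^ q * ∫⁻ y in Set.Ioc (x j) (x (j+1)), w y
      with ha_def
    have hU2 : ∀ k : ℤ, (∫⁻ s in Set.Ioi (x k), (∫⁻ y in Set.Ioi s, h y) ^ q * w s)
        ≤ 2 ^ q * ∑' j : ℤ, (if k ≤ j then a j else 0) := by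
      intro k
      rw [DiscAux.lint_Ioi_xk x hx hxpos hcov _ k]
      have hj : ∀ j : ℤ, (∫⁻ s in Set.Ioc (x j) (x (j+1)),
          (∫⁻ y in Set.Ioi s, h y) ^ q * w s) ≤ 2 ^ q * a j := by
        intro j
        have hmeas1 : Measurable
            (fun s : ℝ => (∫⁻ y in Set.Ioc s (x (j+1)), h y) ^ q * w s) :=
          ((hGmeas _).pow_const q).mul hw_meas
        have hmeas2 : Measurable
            (fun s : ℝ => (∫⁻ y in Set.Ioi (x (j+1)), h y) ^ q * w s) :=
          hw_meas.const_mul _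
        calc (∫⁻ s in Set.Ioc (x j) (x (j+1)), (∫⁻ y in Set.Ioi s, h y) ^ q * w s)
            ≤ ∫⁻ s in Set.Ioc (x j) (x (j+1)), 2 ^ q *
                ((∫⁻ y in Set.Ioc s (x (j+1)), h y) ^ q * w s
                  + (∫⁻ y in Set.Ioi (x (j+1)), h y) ^ q * w s) := by
              refine setLIntegral_mono ((hmeas1.add hmeas2).const_mul _) fun s hs => ?_
              have hsplit : (∫⁻ y in Set.Ioi s, h y)
                  = (∫⁻ y in Set.Ioc s (x (j+1)), h y)
                    + ∫⁻ y in Set.Ioi (x (j+1)), h y := by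
                rw [← lintegral_union measurableSet_Ioi (Set.Ioc_disjoint_Ioi le_rfl),
                  Set.Ioc_union_Ioi_eq_Ioi hs.2]
              rw [hsplit]
              calc ((∫⁻ y in Set.Ioc s (x (j+1)), h y)
                    + ∫⁻ y in Set.Ioi (x (j+1)), h y) ^ q * w s
                  ≤ (2 ^ q * ((∫⁻ y in Set.Ioc s (x (j+1)), h y) ^ q
                      + (∫⁻ y in Set.Ioi (x (j+1)), h y) ^ q)) * w s :=
                    mul_le_mul_left (DiscAux.rpow_add_le _ _ hq.le) _
                _ = 2 ^ q * ((∫⁻ y in Set.Ioc s (x (j+1)), h y) ^ q * w s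
                      + (∫⁻ y in Set.Ioi (x (j+1)), h y) ^ q * w s) := by ring
          _ = 2 ^ q * a j := by
              rw [lintegral_const_mul (f := fun s =>
                  (∫⁻ y in Set.Ioc s (x (j+1)), h y) ^ q * w s
                    + (∫⁻ y in Set.Ioi (x (j+1)), h y) ^ q * w s) _ (hmeas1.add hmeas2),
                lintegral_add_left hmeas1, lintegral_const_mul _ hw_meas, ha_def]
      calc (∑' j : ℤ, if k ≤ j then
              (∫⁻ s in Set.Ioc (x j) (x (j+1)), (∫⁻ y in Set.Ioi s, h y) ^ q * w s)
            else 0)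
          ≤ ∑' j : ℤ, (if k ≤ j then 2 ^ q * a j else 0) :=
            ENNReal.tsum_le_tsum fun j => by
              split_ifs with hkj
              · exact hj j
              · exact le_rfl
        _ = 2 ^ q * ∑' j : ℤ, (if k ≤ j then a j else 0) := by
            simp only [DiscAux.ite_mul_zero]
            exact ENNReal.tsum_mul_left
    have hU1 : Lr ≤ ∑' k : ℤ, (2:ℝ≥0∞) ^ (k:ℤ) *
        (∫⁻ s in Set.Ioi (x k), (∫⁻ y in Set.Ioi s, h y) ^ q * w s) ^ (r / q) := by
      rw [hLr_def, DiscAux.lint_Ioi_zero x hx hcov]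
      refine ENNReal.tsum_le_tsum fun k => ?_
      calc ∫⁻ t in Set.Ioc (x k) (x (k+1)),
              (∫⁻ s in Set.Ioi t, (∫⁻ y in Set.Ioi s, h y) ^ q * w s) ^ (r / q) * u t
          ≤ ∫⁻ t in Set.Ioc (x k) (x (k+1)),
              (∫⁻ s in Set.Ioi (x k), (∫⁻ y in Set.Ioi s, h y) ^ q * w s) ^ (r / q) * u t :=
            setLIntegral_mono (measurable_const.mul hu_meas) (fun t ht =>
              mul_le_mul_left (ENNReal.rpow_le_rpow
                (lintegral_mono_set (Ioi_subset_Ioi ht.1.le)) hρ.le) _)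
        _ = (2:ℝ≥0∞) ^ (k:ℤ) *
              (∫⁻ s in Set.Ioi (x k), (∫⁻ y in Set.Ioi s, h y) ^ q * w s) ^ (r / q) := by
            rw [lintegral_const_mul _ hu_meas, DiscAux.u_piece x hx hxpos u hxu k]
            ring
    have hKle' : (∑' k : ℤ, (2:ℝ≥0∞) ^ (k:ℤ) *
          (∑' j : ℤ, if k ≤ j then a j else 0) ^ (r / q))
        ≤ K * ∑' j : ℤ, (2:ℝ≥0∞) ^ (j:ℤ) * a j ^ (r / q) := by
      simpa only [ENNReal.rpow_intCast] using hKle a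
    have hW6 : ∑' j : ℤ, (2:ℝ≥0∞) ^ (j:ℤ) *
        ((∫⁻ y in Set.Ioi (x (j+1)), h y) ^ r
          * (∫⁻ y in Set.Ioc (x j) (x (j+1)), w y) ^ (r / q)) ≤ 2 * B := by
      have hp : ∀ k : ℤ, (2:ℝ≥0∞) ^ (k:ℤ) *
          ((∫⁻ y in Set.Ioi (x (k+1+1)), h y) ^ r
            * (∫⁻ y in Set.Ioc (x (k+1)) (x (k+1+1)), w y) ^ (r / q))
          ≤ ∫⁻ t in Set.Ioc (x k) (x (k+1)), u t * ⨆ s ∈ Set.Ioi t,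
              (∫⁻ y in Set.Ioc t s, w y) ^ (r / q) * (∫⁻ y in Set.Ioi s, h y) ^ r := by
        intro k
        have hcon : ∀ t ∈ Set.Ioc (x k) (x (k+1)),
            ((∫⁻ y in Set.Ioi (x (k+1+1)), h y) ^ r
              * (∫⁻ y in Set.Ioc (x (k+1)) (x (k+1+1)), w y) ^ (r / q)) * u t
            ≤ u t * ⨆ s ∈ Set.Ioi t,
                (∫⁻ y in Set.Ioc t s, w y) ^ (r / q) * (∫⁻ y in Set.Ioi s, h y) ^ r := by
          intro t ht
          rw [mul_comm]
          refine mul_le_mul_right ?_ (u t)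
          refine le_trans ?_ (le_iSup₂ (f := fun s (_ : s ∈ Set.Ioi t) =>
            (∫⁻ y in Set.Ioc t s, w y) ^ (r / q) * (∫⁻ y in Set.Ioi s, h y) ^ r)
            (x (k+1+1)) (show x (k+1+1) ∈ Set.Ioi t from lt_of_le_of_lt ht.2
              (hx (by omega))))
          rw [mul_comm]
          exact mul_le_mul_left (ENNReal.rpow_le_rpow
            (lintegral_mono_set (Ioc_subset_Ioc_left ht.2)) hρ.le) _
        calc (2:ℝ≥0∞) ^ (k:ℤ) *
              ((∫⁻ y in Set.Ioi (x (k+1+1)), h y) ^ r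
                * (∫⁻ y in Set.Ioc (x (k+1)) (x (k+1+1)), w y) ^ (r / q))
            = ∫⁻ t in Set.Ioc (x k) (x (k+1)),
                ((∫⁻ y in Set.Ioi (x (k+1+1)), h y) ^ r
                  * (∫⁻ y in Set.Ioc (x (k+1)) (x (k+1+1)), w y) ^ (r / q)) * u t := by
              rw [lintegral_const_mul _ hu_meas, DiscAux.u_piece x hx hxpos u hxu k]
              ring
          _ ≤ _ := setLIntegral_mono (hu_meas.mul hsup_meas) hcon
      have hBsum : B = ∑' k : ℤ, ∫⁻ t in Set.Ioc (x k) (x (k+1)),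
          u t * ⨆ s ∈ Set.Ioi t,
            (∫⁻ y in Set.Ioc t s, w y) ^ (r / q) * (∫⁻ y in Set.Ioi s, h y) ^ r := by
        rw [hB_def, DiscAux.lint_Ioi_zero x hx hcov]
      calc ∑' j : ℤ, (2:ℝ≥0∞) ^ (j:ℤ) *
            ((∫⁻ y in Set.Ioi (x (j+1)), h y) ^ r
              * (∫⁻ y in Set.Ioc (x j) (x (j+1)), w y) ^ (r / q))
          = ∑' k : ℤ, (2:ℝ≥0∞) ^ ((k:ℤ)+1) *
            ((∫⁻ y in Set.Ioi (x (k+1+1)), h y) ^ r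
              * (∫⁻ y in Set.Ioc (x (k+1)) (x (k+1+1)), w y) ^ (r / q)) :=
            ((Equiv.addRight (1:ℤ)).tsum_eq (fun j : ℤ => (2:ℝ≥0∞) ^ (j:ℤ) *
              ((∫⁻ y in Set.Ioi (x (j+1)), h y) ^ r
                * (∫⁻ y in Set.Ioc (x j) (x (j+1)), w y) ^ (r / q)))).symm
        _ = ∑' k : ℤ, 2 * ((2:ℝ≥0∞) ^ (k:ℤ) *
            ((∫⁻ y in Set.Ioi (x (k+1+1)), h y) ^ r
              * (∫⁻ y in Set.Ioc (x (k+1)) (x (k+1+1)), w y) ^ (r / q))) := by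
            refine tsum_congr fun k => ?_
            rw [ENNReal.zpow_add (by norm_num) ofNat_ne_top k 1, zpow_one]
            ring
        _ = 2 * ∑' k : ℤ, (2:ℝ≥0∞) ^ (k:ℤ) *
            ((∫⁻ y in Set.Ioi (x (k+1+1)), h y) ^ r
              * (∫⁻ y in Set.Ioc (x (k+1)) (x (k+1+1)), w y) ^ (r / q)) :=
            ENNReal.tsum_mul_left
        _ ≤ 2 * ∑' k : ℤ, ∫⁻ t in Set.Ioc (x k) (x (k+1)),
            u t * ⨆ s ∈ Set.Ioi t,
              (∫⁻ y in Set.Ioc t s, w y) ^ (r / q) * (∫⁻ y in Set.Ioi s, h y) ^ r :=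
            mul_le_mul_right (ENNReal.tsum_le_tsum hp) 2
        _ = 2 * B := by rw [hBsum]
    have hsplit_a : (∑' j : ℤ, (2:ℝ≥0∞) ^ (j:ℤ) * a j ^ (r / q))
        ≤ 2 ^ (r / q) * (A + 2 * B) := by
      calc (∑' j : ℤ, (2:ℝ≥0∞) ^ (j:ℤ) * a j ^ (r / q))
          ≤ ∑' j : ℤ, 2 ^ (r / q) * ((2:ℝ≥0∞) ^ (j:ℤ) *
              (∫⁻ s in Set.Ioc (x j) (x (j+1)),
                (∫⁻ y in Set.Ioc s (x (j+1)), h y) ^ q * w s) ^ (r / q)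
              + (2:ℝ≥0∞) ^ (j:ℤ) *
                ((∫⁻ y in Set.Ioi (x (j+1)), h y) ^ r
                  * (∫⁻ y in Set.Ioc (x j) (x (j+1)), w y) ^ (r / q))) := by
            refine ENNReal.tsum_le_tsum fun j => ?_
            have h1 : a j ^ (r / q) ≤ 2 ^ (r / q) *
                ((∫⁻ s in Set.Ioc (x j) (x (j+1)),
                  (∫⁻ y in Set.Ioc s (x (j+1)), h y) ^ q * w s) ^ (r / q)
                + ((∫⁻ y in Set.Ioi (x (j+1)), h y) ^ q
                    * ∫⁻ y in Set.Ioc (x j) (x (j+1)), w y) ^ (r / q)) := by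
              rw [ha_def]
              exact DiscAux.rpow_add_le _ _ hρ.le
            have h2 : ((∫⁻ y in Set.Ioi (x (j+1)), h y) ^ q
                * ∫⁻ y in Set.Ioc (x j) (x (j+1)), w y) ^ (r / q)
                = (∫⁻ y in Set.Ioi (x (j+1)), h y) ^ r
                  * (∫⁻ y in Set.Ioc (x j) (x (j+1)), w y) ^ (r / q) := by
              rw [ENNReal.mul_rpow_of_nonneg _ _ hρ.le, ← ENNReal.rpow_mul, hqρ]
            calc (2:ℝ≥0∞) ^ (j:ℤ) * a j ^ (r / q)
                ≤ (2:ℝ≥0∞) ^ (j:ℤ) * (2 ^ (r / q) *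
                    ((∫⁻ s in Set.Ioc (x j) (x (j+1)),
                      (∫⁻ y in Set.Ioc s (x (j+1)), h y) ^ q * w s) ^ (r / q)
                    + ((∫⁻ y in Set.Ioi (x (j+1)), h y) ^ q
                        * ∫⁻ y in Set.Ioc (x j) (x (j+1)), w y) ^ (r / q))) :=
                  mul_le_mul_right h1 _
              _ = 2 ^ (r / q) * ((2:ℝ≥0∞) ^ (j:ℤ) *
                    (∫⁻ s in Set.Ioc (x j) (x (j+1)),
                      (∫⁻ y in Set.Ioc s (x (j+1)), h y) ^ q * w s) ^ (r / q)
                    + (2:ℝ≥0∞) ^ (j:ℤ) *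
                      ((∫⁻ y in Set.Ioi (x (j+1)), h y) ^ r
                        * (∫⁻ y in Set.Ioc (x j) (x (j+1)), w y) ^ (r / q))) := by
                  rw [h2]
                  ring
        _ = 2 ^ (r / q) * (A + ∑' j : ℤ, (2:ℝ≥0∞) ^ (j:ℤ) *
              ((∫⁻ y in Set.Ioi (x (j+1)), h y) ^ r
                * (∫⁻ y in Set.Ioc (x j) (x (j+1)), w y) ^ (r / q))) := by
            rw [ENNReal.tsum_mul_left, ENNReal.tsum_add, hA_def]
        _ ≤ 2 ^ (r / q) * (A + 2 * B) :=
            mul_le_mul_right (add_le_add le_rfl hW6) _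
    have hLrM : Lr ≤ M * (A + B) := by
      calc Lr ≤ ∑' k : ℤ, (2:ℝ≥0∞) ^ (k:ℤ) *
            (∫⁻ s in Set.Ioi (x k), (∫⁻ y in Set.Ioi s, h y) ^ q * w s) ^ (r / q) := hU1
        _ ≤ ∑' k : ℤ, (2:ℝ≥0∞) ^ (k:ℤ) *
            (2 ^ q * ∑' j : ℤ, (if k ≤ j then a j else 0)) ^ (r / q) :=
            ENNReal.tsum_le_tsum fun k =>
              mul_le_mul_right (ENNReal.rpow_le_rpow (hU2 k) hρ.le) _
        _ = ∑' k : ℤ, 2 ^ (q * (r / q)) * ((2:ℝ≥0∞) ^ (k:ℤ) *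
            (∑' j : ℤ, (if k ≤ j then a j else 0)) ^ (r / q)) := by
            refine tsum_congr fun k => ?_
            rw [ENNReal.mul_rpow_of_nonneg _ _ hρ.le, ← ENNReal.rpow_mul]
            ring
        _ = 2 ^ (q * (r / q)) * ∑' k : ℤ, (2:ℝ≥0∞) ^ (k:ℤ) *
            (∑' j : ℤ, (if k ≤ j then a j else 0)) ^ (r / q) := ENNReal.tsum_mul_left
        _ ≤ 2 ^ (q * (r / q)) * (K * ∑' j : ℤ, (2:ℝ≥0∞) ^ (j:ℤ) * a j ^ (r / q)) :=
            mul_le_mul_right hKle' _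
        _ ≤ 2 ^ (q * (r / q)) * (K * (2 ^ (r / q) * (A + 2 * B))) :=
            mul_le_mul_right (mul_le_mul_right hsplit_a K) _
        _ = (2 ^ (q * (r / q)) * K * 2 ^ (r / q)) * (A + 2 * B) := by ring
        _ ≤ (2 ^ (q * (r / q)) * K * 2 ^ (r / q)) * (2 * (A + B)) := by
            refine mul_le_mul_right ?_ _
            calc A + 2 * B ≤ 2 * A + 2 * B :=
                add_le_add (le_mul_of_one_le_left (by positivity) one_le_two) le_rfl
              _ = 2 * (A + B) := by ring
        _ = M * (A + B) := by rw [hM_def]; ring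
    calc Lr ^ (1 / r) ≤ (M * (A + B)) ^ (1 / r) := ENNReal.rpow_le_rpow hLrM hrinv
      _ = M ^ (1 / r) * (A + B) ^ (1 / r) := ENNReal.mul_rpow_of_nonneg _ _ hrinv
      _ ≤ M ^ (1 / r) * (2 ^ (1 / r) * (A ^ (1 / r) + B ^ (1 / r))) :=
          mul_le_mul_right (DiscAux.rpow_add_le _ _ hrinv) _
      _ = M ^ (1 / r) * 2 ^ (1 / r) * (A ^ (1 / r) + B ^ (1 / r)) := by ring
end

section
/- Let 1 ≤ q < ∞ and v, w weights on (0,∞). Let k(x,y) be a kernel (non-increasing in x, non-decreasing in y, satisfying k(x,z) ≤ d(k(x,y)+k(y,z)) for 0 ≤ x < y < z, and k(0,y) > 0 for y > 0). Then the best constant C in (∫_0^∞ (∫_x^∞ k(x,y) h(y) dy)^q w(x) dx)^{1/q} ≤ C ∫_0^∞ h v for all nonnegative measurable h satisfies C ≈ O₁ + O₂, where O₁ = sup_{t>0} (∫_0^t w(x) k(x,t)^q dx)^{1/q} ess sup_{s≥t} v(s)^{−1} and O₂ = sup_{t>0} (∫_0^t w)^{1/q} ess sup_{s≥t} k(t,s)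 v(s)^{−1}. -/
open MeasureTheory ENNReal Set

/-- If `lam * b ≤ c` for every positive `lam < a`, then `a * b ≤ c`. -/
lemma ennreal_mul_le_of_forall_lt {a b c : ℝ≥0∞}
    (h : ∀ lam : ℝ≥0∞, 0 < lam → lam < a → lam * b ≤ c) : a * b ≤ c := by
  rcases eq_or_ne a 0 with rfl | ha0
  · simp
  rcases eq_or_ne b 0 with rfl | hb0
  · simp
  rcases eq_or_ne b ⊤ with rfl | hbt
  · obtain ⟨lam, hlam0, hlama⟩ := exists_between (pos_iff_ne_zero.2 ha0)
    have := h lam hlam0 hlama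
    rw [ENNReal.mul_top hlam0.ne'] at this
    exact le_trans le_top this
  · have hble : a ≤ c / b := by
      by_contra hcon
      push_neg at hcon
      obtain ⟨lam, h1, h2⟩ := exists_between hcon
      have hlam0 : 0 < lam := lt_of_le_of_lt (zero_le) h1
      have := h lam hlam0 h2
      exact absurd ((ENNReal.le_div_iff_mul_le (Or.inl hb0) (Or.inl hbt)).2 this)
        (not_le.2 h1)
    exact (ENNReal.le_div_iff_mul_le (Or.inl hb0) (Or.inl hbt)).1 hble

/-- If `a⁻¹ * b < c` then `b ≤ c * a`. -/
lemma ennreal_le_mul_of_inv_mul_lt {a b c : ℝ≥0∞} (h : a⁻¹ * b < c) : b ≤ c * a := by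
  rcases eq_or_ne a 0 with rfl | ha0
  · rcases eq_or_ne b 0 with rfl | hb0
    · simp
    · rw [ENNReal.inv_zero, ENNReal.top_mul hb0] at h
      exact absurd h (by simp)
  rcases eq_or_ne a ⊤ with rfl | hat
  · have hc0 : 0 < c := lt_of_le_of_lt (zero_le) h
    rw [ENNReal.mul_top hc0.ne']
    exact le_top
  · have hbt : b ≠ ⊤ := by
      intro hb
      rw [hb, ENNReal.mul_top (ENNReal.inv_ne_zero.2 hat)] at h
      exact absurd h (by simp)
    calc b = a * (a⁻¹ * b) := by
            rw [← mul_assoc, ENNReal.mul_inv_cancel ha0 hat, one_mul]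
      _ ≤ a * c := mul_le_mul_right h.le a
      _ = c * a := mul_comm _ _

/-- `(a+b)^q ≤ 2^q * (a^q + b^q)` for `q ≥ 0`. -/
lemma ennreal_add_rpow_le {a b : ℝ≥0∞} {q : ℝ} (hq : 0 ≤ q) :
    (a + b) ^ q ≤ 2 ^ q * (a ^ q + b ^ q) := by
  have h1 : a + b ≤ 2 * max a b := by
    rw [two_mul]
    exact add_le_add (le_max_left _ _) (le_max_right _ _)
  calc (a + b) ^ q ≤ (2 * max a b) ^ q := ENNReal.rpow_le_rpow h1 hq
    _ = 2 ^ q * (max a b) ^ q := ENNReal.mul_rpow_of_nonneg _ _ hq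
    _ ≤ 2 ^ q * (a ^ q + b ^ q) := by
        gcongr
        rcases max_cases a b with ⟨h, _⟩ | ⟨h, _⟩ <;> rw [h]
        · exact le_add_right le_rfl
        · exact le_add_left le_rfl


/-- **Minkowski's integral inequality** for `ℝ≥0∞`-valued functions. -/
lemma minkowski_lintegral {α β : Type*} [MeasurableSpace α] [MeasurableSpace β]
    (μ : Measure α) (ν : Measure β) [SigmaFinite μ] [SigmaFinite ν]
    {q : ℝ} (hq : 1 ≤ q) {f : α → β → ℝ≥0∞} (hf : Measurable (Function.uncurry f)) :
    (∫⁻ x, (∫⁻ y, f x y ∂ν) ^ q ∂μ) ^ (1 / q) ≤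
      ∫⁻ y, (∫⁻ x, (f x y) ^ q ∂μ) ^ (1 / q) ∂ν := by
  have hq0 : (0:ℝ) < q := lt_of_lt_of_le zero_lt_one hq
  rcases eq_or_lt_of_le hq with rfl | hq1
  · simp only [rpow_one, one_div_one]
    rw [lintegral_lintegral_swap hf.aemeasurable]
  -- `1 < q`.  Let `Φ x = ∫⁻ y, f x y ∂ν` and `R` be the RHS.
  set Φ : α → ℝ≥0∞ := fun x => ∫⁻ y, f x y ∂ν with hΦ
  have hΦm : Measurable Φ := hf.lintegral_prod_right
  set R : ℝ≥0∞ := ∫⁻ y, (∫⁻ x, (f x y) ^ q ∂μ) ^ (1 / q) ∂ν with hR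
  rcases eq_or_ne R ⊤ with hRt | hRt
  · rw [hRt]; exact le_top
  have hcon : q.HolderConjugate (q/(q-1)) :=
    (Real.holderConjugate_iff_eq_conjExponent hq1).2 rfl
  set p : ℝ := q / (q - 1) with hp
  have hconp : p.HolderConjugate q := hcon.symm
  -- truncations
  set S : ℕ → Set α := spanningSets μ with hS
  set Φn : ℕ → α → ℝ≥0∞ := fun n x => (S n).indicator (fun x => min (Φ x) n) x with hΦn
  have hΦnm : ∀ n, Measurable (Φn n) := fun n =>
    (hΦm.min measurable_const).indicator (measurableSet_spanningSets μ n)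
  have hΦnleΦ : ∀ n x, Φn n x ≤ Φ x := by
    intro n x
    refine le_trans (Set.indicator_le_self _ _ x) (min_le_left _ _)
  have hΦnlt : ∀ n x, Φn n x ≤ (n : ℝ≥0∞) := by
    intro n x
    classical
    simp only [hΦn, Set.indicator]
    split
    · exact min_le_right _ _
    · exact zero_le
  set A : ℕ → ℝ≥0∞ := fun n => ∫⁻ x, (Φn n x) ^ q ∂μ with hA
  have hAfin : ∀ n, A n < ⊤ := by
    intro n
    have : ∀ x, (Φn n x) ^ q ≤ (S n).indicator (fun _ => (n:ℝ≥0∞) ^ q) x := by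
      intro x
      classical
      simp only [hΦn, Set.indicator]
      split
      · exact ENNReal.rpow_le_rpow (min_le_right _ _) hq0.le
      · rw [ENNReal.zero_rpow_of_pos hq0]
    calc A n ≤ ∫⁻ x, (S n).indicator (fun _ => (n:ℝ≥0∞) ^ q) x ∂μ := lintegral_mono this
      _ = (n:ℝ≥0∞) ^ q * μ (S n) := by
          rw [lintegral_indicator (measurableSet_spanningSets μ n), setLIntegral_const]
      _ < ⊤ := ENNReal.mul_lt_top
          (ENNReal.rpow_lt_top_of_nonneg hq0.le (natCast_ne_top n))
          (measure_spanningSets_lt_top μ n)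
  -- key estimate `A n ≤ A n ^ (1/p) * R`
  have hkey : ∀ n, A n ≤ A n ^ (1/p) * R := by
    intro n
    have step1 : A n ≤ ∫⁻ x, (Φn n x) ^ (q-1) * Φ x ∂μ := by
      refine lintegral_mono fun x => ?_
      rcases eq_or_ne (Φn n x) 0 with h0 | h0
      · rw [h0, ENNReal.zero_rpow_of_pos hq0, ENNReal.zero_rpow_of_pos (by linarith), zero_mul]
      · have hne : Φn n x ≠ ⊤ := (lt_of_le_of_lt (hΦnlt n x) (natCast_lt_top n)).ne
        have heq : (Φn n x) ^ q = (Φn n x) ^ (q-1) * Φn n x :=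
          calc (Φn n x) ^ q = (Φn n x) ^ ((q-1)+1) := by ring_nf
            _ = (Φn n x) ^ (q-1) * (Φn n x) ^ (1:ℝ) := ENNReal.rpow_add _ _ h0 hne
            _ = (Φn n x) ^ (q-1) * Φn n x := by rw [ENNReal.rpow_one]
        rw [heq]
        exact mul_le_mul_right (hΦnleΦ n x) _
    have hmeasprod : Measurable (Function.uncurry fun x y => (Φn n x) ^ (q-1) * f x y) := by
      have h1 : Measurable fun z : α × β => (Φn n z.1) ^ (q-1) :=
        ((hΦnm n).comp measurable_fst).pow_const _
      exact h1.mul hf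
    have step2 : (∫⁻ x, (Φn n x) ^ (q-1) * Φ x ∂μ) =
        ∫⁻ y, ∫⁻ x, (Φn n x) ^ (q-1) * f x y ∂μ ∂ν := by
      have : ∀ x, (Φn n x) ^ (q-1) * Φ x = ∫⁻ y, (Φn n x) ^ (q-1) * f x y ∂ν := by
        intro x
        rw [hΦ, lintegral_const_mul _ (hf.of_uncurry_left)]
      simp_rw [this]
      exact lintegral_lintegral_swap hmeasprod.aemeasurable
    have step3 : ∀ y, (∫⁻ x, (Φn n x) ^ (q-1) * f x y ∂μ) ≤
        A n ^ (1/p) * (∫⁻ x, (f x y) ^ q ∂μ) ^ (1/q) := by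
      intro y
      have hH := ENNReal.lintegral_mul_le_Lp_mul_Lq μ hconp
        (f := fun x => (Φn n x) ^ (q-1)) (g := fun x => f x y)
        (((hΦnm n).pow_const (q-1)).aemeasurable)
        ((hf.comp (measurable_id.prodMk (measurable_const (a := y)))).aemeasurable)
      simp only [Pi.mul_apply] at hH
      refine le_trans (le_of_eq (by rfl)) (le_trans hH ?_)
      have hq1ne : q - 1 ≠ 0 := by linarith
      have : ∀ x, ((Φn n x) ^ (q-1)) ^ p = (Φn n x) ^ q := by
        intro x
        rw [← ENNReal.rpow_mul, hp]
        congr 1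
        rw [mul_comm, div_mul_cancel₀ q hq1ne]
      simp_rw [this]
      exact le_rfl
    calc A n ≤ ∫⁻ x, (Φn n x) ^ (q-1) * Φ x ∂μ := step1
      _ = ∫⁻ y, ∫⁻ x, (Φn n x) ^ (q-1) * f x y ∂μ ∂ν := step2
      _ ≤ ∫⁻ y, A n ^ (1/p) * (∫⁻ x, (f x y) ^ q ∂μ) ^ (1/q) ∂ν :=
          lintegral_mono step3
      _ = A n ^ (1/p) * R := by
          rw [lintegral_const_mul' _ _
            (ENNReal.rpow_lt_top_of_nonneg hconp.one_div_nonneg (hAfin n).ne).ne]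
  -- hence `A n ^ (1/q) ≤ R`, i.e. `A n ≤ R ^ q`
  have hAle : ∀ n, A n ≤ R ^ q := by
    intro n
    rcases eq_or_ne (A n) 0 with h0 | h0
    · rw [h0]; exact zero_le
    have hAnt : A n ≠ ⊤ := (hAfin n).ne
    have hsum : 1/p + 1/q = 1 := by
      rw [one_div, one_div]; exact hconp.inv_add_inv_eq_one
    have hsplit : A n = A n ^ (1/p) * A n ^ (1/q) := by
      rw [← ENNReal.rpow_add _ _ h0 hAnt, hsum, ENNReal.rpow_one]
    have hcanc : A n ^ (1/q) ≤ R := by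
      have hk := hsplit.symm.trans_le (hkey n)
      exact (ENNReal.mul_le_mul_iff_right
        (ENNReal.rpow_pos (pos_iff_ne_zero.2 h0) hAnt).ne'
        (ENNReal.rpow_lt_top_of_nonneg hconp.one_div_nonneg hAnt).ne).1 hk
    calc A n = (A n ^ (1/q)) ^ q := by
          rw [← ENNReal.rpow_mul, one_div, inv_mul_cancel₀ hq0.ne', ENNReal.rpow_one]
      _ ≤ R ^ q := ENNReal.rpow_le_rpow hcanc hq0.le
  -- monotone convergence
  have hmono : ∀ x, Monotone fun n => Φn n x := by
    intro x n m hnm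
    classical
    simp only [hΦn, Set.indicator]
    split
    · have hmem : x ∈ S m := monotone_spanningSets μ hnm (by assumption)
      rw [if_pos hmem]
      exact min_le_min le_rfl (Nat.cast_le.2 hnm)
    · exact zero_le
  have hsup : ∀ x, (⨆ n, Φn n x) = Φ x := by
    intro x
    refine le_antisymm (iSup_le fun n => hΦnleΦ n x) ?_
    have hxS : ∃ N, x ∈ S N := by
      have : x ∈ ⋃ n, S n := by rw [hS, iUnion_spanningSets]; trivial
      exact mem_iUnion.1 this
    obtain ⟨N, hN⟩ := hxS
    rcases eq_or_ne (Φ x) ⊤ with htop | hfin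
    · rw [htop]
      have h1 : ∀ m : ℕ, (m : ℝ≥0∞) ≤ ⨆ n, Φn n x := by
        intro m
        have hmem : x ∈ S (max N m) := monotone_spanningSets μ (le_max_left _ _) hN
        have : (m:ℝ≥0∞) ≤ Φn (max N m) x := by
          classical
          simp only [hΦn, Set.indicator, if_pos hmem, htop]
          rw [min_eq_right le_top]
          exact_mod_cast Nat.cast_le.2 (le_max_right N m)
        exact le_trans this (le_iSup (fun n => Φn n x) (max N m))
      calc (⊤:ℝ≥0∞) = ⨆ m : ℕ, (m:ℝ≥0∞) := ENNReal.iSup_natCast.symm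
        _ ≤ ⨆ n, Φn n x := iSup_le h1
    · obtain ⟨m, hm⟩ := ENNReal.exists_nat_gt hfin
      have hmem : x ∈ S (max N m) := monotone_spanningSets μ (le_max_left _ _) hN
      have : Φ x ≤ Φn (max N m) x := by
        classical
        simp only [hΦn, Set.indicator, if_pos hmem]
        rw [min_eq_left]
        exact le_trans hm.le (Nat.cast_le.2 (le_max_right N m))
      exact le_trans this (le_iSup (fun n => Φn n x) (max N m))
  have hsupq : ∀ x, (⨆ n, (Φn n x) ^ q) = (Φ x) ^ q := by
    intro x
    refine le_antisymm (iSup_le fun n => ENNReal.rpow_le_rpow (hΦnleΦ n x) hq0.le) ?_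
    set B := ⨆ n, (Φn n x) ^ q with hB
    have h1 : ∀ n, Φn n x ≤ B ^ (1/q) := by
      intro n
      have h2 : (Φn n x) ^ q ≤ B := le_iSup (fun n => (Φn n x) ^ q) n
      calc Φn n x = ((Φn n x) ^ q) ^ (1/q) := by
            rw [← ENNReal.rpow_mul, one_div, mul_inv_cancel₀ hq0.ne', ENNReal.rpow_one]
        _ ≤ B ^ (1/q) := ENNReal.rpow_le_rpow h2 (by positivity)
    have h3 : Φ x ≤ B ^ (1/q) := by
      rw [← hsup x]; exact iSup_le h1
    calc (Φ x) ^ q ≤ (B ^ (1/q)) ^ q := ENNReal.rpow_le_rpow h3 hq0.le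
      _ = B := by rw [← ENNReal.rpow_mul, one_div, inv_mul_cancel₀ hq0.ne', ENNReal.rpow_one]
  have hMCT : (∫⁻ x, (Φ x) ^ q ∂μ) = ⨆ n, A n := by
    rw [← lintegral_iSup (fun n => (hΦnm n).pow_const q)
      (fun n m hnm x => ENNReal.rpow_le_rpow (hmono x hnm) hq0.le)]
    exact lintegral_congr fun x => (hsupq x).symm
  have hfinal : (∫⁻ x, (Φ x) ^ q ∂μ) ≤ R ^ q := by
    rw [hMCT]; exact iSup_le hAle
  calc (∫⁻ x, (∫⁻ y, f x y ∂ν) ^ q ∂μ) ^ (1/q) = (∫⁻ x, (Φ x) ^ q ∂μ) ^ (1/q) := rfl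
    _ ≤ (R ^ q) ^ (1/q) := ENNReal.rpow_le_rpow hfinal (by positivity)
    _ = R := by rw [← ENNReal.rpow_mul, one_div, mul_inv_cancel₀ hq0.ne', ENNReal.rpow_one]

lemma lower_bound_O1
    (q : ℝ) (hq : 1 ≤ q) (v w : ℝ → ℝ≥0∞) (hv : Measurable v)
    (k : ℝ → ℝ → ℝ≥0∞) (hkm : Measurable (Function.uncurry k))
    (hk2 : ∀ x, MonotoneOn (fun y => k x y) (Set.Ici 0))
    (t : ℝ) (ht : 0 < t) (C' : ℝ≥0∞)
    (hC' : ∀ h : ℝ → ℝ≥0∞, Measurable h →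
      (∫⁻ x in Set.Ioi (0:ℝ), (∫⁻ y in Set.Ioi x, k x y * h y) ^ q * w x) ^ (1/q)
        ≤ C' * ∫⁻ y in Set.Ioi (0:ℝ), h y * v y) :
    (∫⁻ s in Set.Ioc 0 t, w s * k s t ^ q) ^ (1/q) *
      essSup (fun s => (v s)⁻¹) (volume.restrict (Set.Ici t)) ≤ C' := by
  have hq0 : (0:ℝ) < q := lt_of_lt_of_le zero_lt_one hq
  rw [mul_comm]
  refine ennreal_mul_le_of_forall_lt fun lam hlam0 hlamE => ?_
  have hlamt : lam ≠ ⊤ := hlamE.ne_top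
  -- the set where `v⁻¹ > lam` has positive measure in `Ici t`
  have hmeasset : MeasurableSet {s : ℝ | lam < (v s)⁻¹} :=
    measurableSet_lt measurable_const hv.inv
  have hpos : volume ({s : ℝ | lam < (v s)⁻¹} ∩ Ici t) ≠ 0 := by
    intro h0
    rw [essSup_eq_sInf] at hlamE
    refine absurd (sInf_le ?_) (not_le.2 hlamE)
    show volume.restrict (Ici t) {s | lam < (v s)⁻¹} = 0
    rw [Measure.restrict_apply hmeasset]
    exact h0
  set E : Set ℝ := {s : ℝ | lam < (v s)⁻¹} ∩ Ici t with hE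
  have hEmeas : MeasurableSet E := hmeasset.inter measurableSet_Ici
  have hEcover : E = ⋃ n : ℕ, E ∩ Icc t (t + n) := by
    ext s
    simp only [mem_iUnion, mem_inter_iff, mem_Icc]
    constructor
    · rintro hs
      obtain ⟨n, hn⟩ := exists_nat_ge (s - t)
      exact ⟨n, hs, hs.2, by linarith⟩
    · rintro ⟨n, hs, _⟩; exact hs
  have hEb : ∃ n : ℕ, volume (E ∩ Icc t (t + n)) ≠ 0 := by
    by_contra hcon
    push_neg at hcon
    refine hpos ?_
    calc volume E = volume (⋃ n : ℕ, E ∩ Icc t (t + n)) := by rw [← hEcover]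
      _ = 0 := measure_iUnion_null hcon
  obtain ⟨n, hVpos⟩ := hEb
  set B : Set ℝ := E ∩ Icc t (t + n) with hB
  have hBmeas : MeasurableSet B := hEmeas.inter measurableSet_Icc
  have hVfin : volume B ≠ ⊤ :=
    (lt_of_le_of_lt (measure_mono inter_subset_right) measure_Icc_lt_top).ne
  set V : ℝ≥0∞ := volume B with hV
  have hBsub : B ⊆ Ici t := fun s hs => hs.1.2
  have hBsub0 : B ⊆ Ioi (0:ℝ) := fun s hs => lt_of_lt_of_le ht (hBsub hs)
  -- test function
  set h : ℝ → ℝ≥0∞ := B.indicator 1 with hh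
  have hhm : Measurable h := measurable_one.indicator hBmeas
  have hCapp := hC' h hhm
  -- right hand side estimate
  have hRHS : (∫⁻ y in Set.Ioi (0:ℝ), h y * v y) ≤ lam⁻¹ * V := by
    have heq : ∀ y, h y * v y = B.indicator v y := by
      intro y
      by_cases hy : y ∈ B
      · simp [hh, indicator_of_mem hy]
      · simp [hh, indicator_of_notMem hy]
    calc (∫⁻ y in Set.Ioi (0:ℝ), h y * v y)
        = ∫⁻ y in Set.Ioi (0:ℝ), B.indicator v y := by
          exact lintegral_congr heq
      _ = ∫⁻ y in B, v y := by
          rw [lintegral_indicator hBmeas, Measure.restrict_restrict hBmeas,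
            inter_eq_self_of_subset_left hBsub0]
      _ ≤ ∫⁻ _ in B, lam⁻¹ := by
          refine setLIntegral_mono measurable_const fun s hs => ?_
          have h1 : lam < (v s)⁻¹ := hs.1.1
          calc v s = ((v s)⁻¹)⁻¹ := (inv_inv _).symm
            _ ≤ lam⁻¹ := ENNReal.inv_le_inv.2 h1.le
      _ = lam⁻¹ * V := by rw [setLIntegral_const, mul_comm]
  -- left hand side estimate
  have hLHS : V * (∫⁻ s in Set.Ioc 0 t, w s * k s t ^ q) ^ (1/q) ≤
      (∫⁻ x in Set.Ioi (0:ℝ), (∫⁻ y in Set.Ioi x, k x y * h y) ^ q * w x) ^ (1/q) := by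
    have hinner : ∀ x ∈ Ioo (0:ℝ) t, k x t * V ≤ ∫⁻ y in Set.Ioi x, k x y * h y := by
      intro x hx
      have hBsub' : B ⊆ Ioi x := fun s hs => lt_of_lt_of_le hx.2 (hBsub hs)
      have heq : ∀ y, k x y * h y = B.indicator (fun y => k x y) y := by
        intro y
        by_cases hy : y ∈ B
        · simp [hh, indicator_of_mem hy]
        · simp [hh, indicator_of_notMem hy]
      calc k x t * V = ∫⁻ _ in B, k x t := by rw [setLIntegral_const]
        _ ≤ ∫⁻ y in B, k x y := by
            refine setLIntegral_mono (hkm.of_uncurry_left) fun s hs => ?_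
            exact hk2 x (le_of_lt ht) (le_trans (le_of_lt ht) (hBsub hs)) (hBsub hs)
        _ = ∫⁻ y in Set.Ioi x, B.indicator (fun y => k x y) y := by
            rw [lintegral_indicator hBmeas, Measure.restrict_restrict hBmeas,
              inter_eq_self_of_subset_left hBsub']
        _ = ∫⁻ y in Set.Ioi x, k x y * h y := (lintegral_congr heq).symm
    calc V * (∫⁻ s in Set.Ioc 0 t, w s * k s t ^ q) ^ (1/q)
        = (V ^ q * ∫⁻ s in Set.Ioc 0 t, w s * k s t ^ q) ^ (1/q) := by
          rw [ENNReal.mul_rpow_of_nonneg _ _ (by positivity), ← ENNReal.rpow_mul,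
            mul_one_div_cancel hq0.ne', ENNReal.rpow_one]
      _ = (∫⁻ s in Set.Ioc 0 t, V ^ q * (w s * k s t ^ q)) ^ (1/q) := by
          rw [lintegral_const_mul' _ _ (ENNReal.rpow_lt_top_of_nonneg hq0.le hVfin).ne]
      _ = (∫⁻ s in Set.Ioo 0 t, V ^ q * (w s * k s t ^ q)) ^ (1/q) := by
          rw [setLIntegral_congr (Filter.EventuallyEq.symm Ioo_ae_eq_Ioc)]
      _ = (∫⁻ x in Set.Ioo 0 t, (k x t * V) ^ q * w x) ^ (1/q) := by
          congr 1
          refine lintegral_congr fun x => ?_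
          rw [ENNReal.mul_rpow_of_nonneg _ _ hq0.le]
          ring
      _ ≤ (∫⁻ x in Set.Ioo 0 t, (∫⁻ y in Set.Ioi x, k x y * h y) ^ q * w x) ^ (1/q) := by
          refine ENNReal.rpow_le_rpow (setLIntegral_mono' measurableSet_Ioo
            fun x hx => ?_) (by positivity)
          exact mul_le_mul_left (ENNReal.rpow_le_rpow (hinner x hx) hq0.le) _
      _ ≤ (∫⁻ x in Set.Ioi (0:ℝ), (∫⁻ y in Set.Ioi x, k x y * h y) ^ q * w x) ^ (1/q) := by
          refine ENNReal.rpow_le_rpow (lintegral_mono_set Ioo_subset_Ioi_self) (by positivity)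
  -- combine and cancel
  have hcomb : V * (∫⁻ s in Set.Ioc 0 t, w s * k s t ^ q) ^ (1/q) ≤ (C' * lam⁻¹) * V :=
    le_trans hLHS (le_trans hCapp (by
      rw [mul_assoc]
      exact mul_le_mul_right hRHS C'))
  rw [mul_comm V _] at hcomb
  have hW := (ENNReal.mul_le_mul_iff_left hVpos hVfin).1 hcomb
  calc lam * (∫⁻ s in Set.Ioc 0 t, w s * k s t ^ q) ^ (1/q)
      ≤ lam * (C' * lam⁻¹) := mul_le_mul_right hW lam
    _ = C' * (lam * lam⁻¹) := by ring
    _ = C' := by rw [ENNReal.mul_inv_cancel hlam0.ne' hlamt, mul_one]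

lemma exists_pos_bounded {E : Set ℝ} {t : ℝ} (hE : E ⊆ Set.Ici t)
    (hpos : volume E ≠ 0) : ∃ n : ℕ, volume (E ∩ Set.Icc t (t + n)) ≠ 0 := by
  by_contra hcon
  push_neg at hcon
  refine hpos ?_
  have hEcover : E = ⋃ n : ℕ, E ∩ Icc t (t + n) := by
    ext s
    simp only [mem_iUnion, mem_inter_iff, mem_Icc]
    constructor
    · rintro hs
      obtain ⟨n, hn⟩ := exists_nat_ge (s - t)
      exact ⟨n, hs, hE hs, by linarith⟩
    · rintro ⟨n, hs, _⟩; exact hs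
  rw [hEcover]
  exact measure_iUnion_null hcon

lemma lower_bound_O2
    (q : ℝ) (hq : 1 ≤ q) (v w : ℝ → ℝ≥0∞) (hv : Measurable v) (hwm : Measurable w)
    (k : ℝ → ℝ → ℝ≥0∞) (hkm : Measurable (Function.uncurry k))
    (hk1 : ∀ y, AntitoneOn (fun x => k x y) (Set.Ici 0))
    (t : ℝ) (ht : 0 < t)
    (hwpos : 0 < ∫⁻ s in Set.Ioc 0 t, w s)
    (C' : ℝ≥0∞)
    (hC' : ∀ h : ℝ → ℝ≥0∞, Measurable h →
      (∫⁻ x in Set.Ioi (0:ℝ), (∫⁻ y in Set.Ioi x, k x y * h y) ^ q * w x) ^ (1/q)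
        ≤ C' * ∫⁻ y in Set.Ioi (0:ℝ), h y * v y) :
    (∫⁻ s in Set.Ioc 0 t, w s) ^ (1/q) *
      essSup (fun s => k t s * (v s)⁻¹) (volume.restrict (Set.Ici t)) ≤ C' := by
  have hq0 : (0:ℝ) < q := lt_of_lt_of_le zero_lt_one hq
  rw [mul_comm]
  refine ennreal_mul_le_of_forall_lt fun lam hlam0 hlamE => ?_
  have hlamt : lam ≠ ⊤ := hlamE.ne_top
  set U : ℝ≥0∞ := ∫⁻ s in Set.Ioc 0 t, w s with hU
  -- generic lower bound for the operator applied to an indicator of `B ⊆ Ici t`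
  have hgen : ∀ B : Set ℝ, MeasurableSet B → B ⊆ Ici t →
      (∫⁻ y in B, k t y) ^ q * ∫⁻ s in Set.Ioo 0 t, w s ≤
      ∫⁻ x in Set.Ioi (0:ℝ), (∫⁻ y in Set.Ioi x, k x y * B.indicator 1 y) ^ q * w x := by
    intro B hBmeas hBsub
    have hBsub0 : B ⊆ Ioi (0:ℝ) := fun s hs => lt_of_lt_of_le ht (hBsub hs)
    have hinner : ∀ x ∈ Ioo (0:ℝ) t,
        (∫⁻ y in B, k t y) ≤ ∫⁻ y in Set.Ioi x, k x y * B.indicator 1 y := by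
      intro x hx
      have hBsub' : B ⊆ Ioi x := fun s hs => lt_of_lt_of_le hx.2 (hBsub hs)
      have heq : ∀ y, k x y * B.indicator 1 y = B.indicator (fun y => k x y) y := by
        intro y
        by_cases hy : y ∈ B
        · simp [indicator_of_mem hy]
        · simp [indicator_of_notMem hy]
      calc (∫⁻ y in B, k t y) ≤ ∫⁻ y in B, k x y := by
            refine setLIntegral_mono (hkm.of_uncurry_left) fun s hs => ?_
            exact hk1 s (mem_Ici.2 hx.1.le) (mem_Ici.2 ht.le) hx.2.le
        _ = ∫⁻ y in Set.Ioi x, B.indicator (fun y => k x y) y := by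
            rw [lintegral_indicator hBmeas, Measure.restrict_restrict hBmeas,
              inter_eq_self_of_subset_left hBsub']
        _ = ∫⁻ y in Set.Ioi x, k x y * B.indicator 1 y := (lintegral_congr heq).symm
    calc (∫⁻ y in B, k t y) ^ q * ∫⁻ s in Set.Ioo 0 t, w s
        = ∫⁻ x in Set.Ioo 0 t, (∫⁻ y in B, k t y) ^ q * w x := by
          rw [lintegral_const_mul'' _ hwm.aemeasurable]
      _ ≤ ∫⁻ x in Set.Ioo 0 t, (∫⁻ y in Set.Ioi x, k x y * B.indicator 1 y) ^ q * w x := by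
          refine setLIntegral_mono' measurableSet_Ioo fun x hx => ?_
          exact mul_le_mul_left (ENNReal.rpow_le_rpow (hinner x hx) hq0.le) _
      _ ≤ ∫⁻ x in Set.Ioi (0:ℝ), (∫⁻ y in Set.Ioi x, k x y * B.indicator 1 y) ^ q * w x :=
          lintegral_mono_set Ioo_subset_Ioi_self
  have hUoo : (∫⁻ s in Set.Ioo 0 t, w s) = U := by
    rw [hU]
    exact setLIntegral_congr Ioo_ae_eq_Ioc
  -- the set where `k t s * v s⁻¹ > lam` has positive measure in `Ici t`
  have hktm : Measurable fun s => k t s := hkm.of_uncurry_left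
  have hmeasset : MeasurableSet {s : ℝ | lam < k t s * (v s)⁻¹} :=
    measurableSet_lt measurable_const (hktm.mul hv.inv)
  have hpos : volume ({s : ℝ | lam < k t s * (v s)⁻¹} ∩ Ici t) ≠ 0 := by
    intro h0
    rw [essSup_eq_sInf] at hlamE
    refine absurd (sInf_le ?_) (not_le.2 hlamE)
    show volume.restrict (Ici t) {s | lam < k t s * (v s)⁻¹} = 0
    rw [Measure.restrict_apply hmeasset]
    exact h0
  set E : Set ℝ := {s : ℝ | lam < k t s * (v s)⁻¹} ∩ Ici t with hE
  have hEmeas : MeasurableSet E := hmeasset.inter measurableSet_Ici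
  have hEsub : E ⊆ Ici t := fun s hs => hs.2
  -- on `E`, basic consequences
  have hElt : ∀ s ∈ E, lam < k t s * (v s)⁻¹ := fun s hs => hs.1
  have hkpos : ∀ s ∈ E, k t s ≠ 0 := by
    intro s hs h0
    have h1 := hElt s hs
    rw [h0, zero_mul] at h1
    exact absurd h1 (not_lt.2 (zero_le))
  have hvfin : ∀ s ∈ E, v s ≠ ⊤ := by
    intro s hs h0
    have h1 := hElt s hs
    rw [h0, ENNReal.inv_top, mul_zero] at h1
    exact absurd h1 (not_lt.2 (zero_le))
  have hklam : ∀ s ∈ E, lam * v s ≤ k t s := by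
    intro s hs
    rcases eq_or_ne (v s) 0 with h0 | h0
    · rw [h0, mul_zero]; exact zero_le
    · calc lam * v s ≤ (k t s * (v s)⁻¹) * v s := mul_le_mul_left (hElt s hs).le _
        _ = k t s := by
          rw [mul_assoc, ENNReal.inv_mul_cancel h0 (hvfin s hs), mul_one]
  by_cases hF : volume (E ∩ {s : ℝ | v s = 0}) ≠ 0
  · -- degenerate case : `v` vanishes on a positive-measure subset; no finite `C'` works
    exfalso
    obtain ⟨n, hVpos⟩ := exists_pos_bounded
      (fun s hs => hEsub hs.1) hF
    set B : Set ℝ := (E ∩ {s : ℝ | v s = 0}) ∩ Icc t (t + n) with hB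
    have hBmeas : MeasurableSet B :=
      ((hEmeas.inter (hv (measurableSet_singleton 0))).inter measurableSet_Icc)
    have hBsub : B ⊆ Ici t := fun s hs => hEsub hs.1.1
    have hCapp := hC' (B.indicator 1) (measurable_one.indicator hBmeas)
    have hRHS0 : (∫⁻ y in Set.Ioi (0:ℝ), B.indicator 1 y * v y) = 0 := by
      have heq : ∀ y, B.indicator 1 y * v y = 0 := by
        intro y
        by_cases hy : y ∈ B
        · have hv0 : v y = 0 := hy.1.2
          rw [hv0, mul_zero]
        · simp [indicator_of_notMem hy]
      rw [lintegral_congr heq, lintegral_zero]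
    have hX0 : (∫⁻ x in Set.Ioi (0:ℝ),
        (∫⁻ y in Set.Ioi x, k x y * B.indicator 1 y) ^ q * w x) = 0 := by
      rw [hRHS0, mul_zero] at hCapp
      have h1 := le_antisymm hCapp (zero_le)
      rcases ENNReal.rpow_eq_zero_iff.mp h1 with ⟨h2, _⟩ | ⟨_, h3⟩
      · exact h2
      · exact absurd h3 (not_lt.2 (one_div_pos.2 hq0).le)
    have hint : 0 < ∫⁻ y in B, k t y := by
      have hsub : B ⊆ Function.support fun s => k t s := fun s hs => hkpos s hs.1.1
      rw [lintegral_pos_iff_support hktm, Measure.restrict_apply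
        (measurableSet_support hktm), inter_eq_self_of_subset_right hsub]
      exact pos_iff_ne_zero.2 hVpos
    have hintq : (0:ℝ≥0∞) < (∫⁻ y in B, k t y) ^ q := by
      rcases eq_or_ne (∫⁻ y in B, k t y) ⊤ with htop | hne
      · rw [htop, ENNReal.top_rpow_of_pos hq0]; exact zero_lt_top
      · exact ENNReal.rpow_pos hint hne
    have := hgen B hBmeas hBsub
    rw [hX0, hUoo] at this
    have hzero : (∫⁻ y in B, k t y) ^ q * U = 0 := le_antisymm this (zero_le)
    rcases mul_eq_zero.mp hzero with h1 | h1
    · exact hintq.ne' h1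
    · exact hwpos.ne' h1
  · -- main case : `E' := E \ {v = 0}` has positive measure
    push_neg at hF
    set E' : Set ℝ := E \ {s : ℝ | v s = 0} with hE'
    have hE'meas : MeasurableSet E' := hEmeas.diff (hv (measurableSet_singleton 0))
    have hE'pos : volume E' ≠ 0 := by
      intro h0
      refine hpos ?_
      have : E ⊆ E' ∪ (E ∩ {s : ℝ | v s = 0}) := by
        intro s hs
        by_cases h : v s = 0
        · exact Or.inr ⟨hs, h⟩
        · exact Or.inl ⟨hs, h⟩
      have hle : volume E ≤ 0 :=
        calc volume E ≤ volume (E' ∪ (E ∩ {s : ℝ | v s = 0})) := measure_mono this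
          _ ≤ volume E' + volume (E ∩ {s : ℝ | v s = 0}) := measure_union_le _ _
          _ = 0 := by rw [h0, hF, add_zero]
      exact le_antisymm hle (zero_le)
    -- cover `E'` by pieces where `v` is bounded
    have hcover : E' = ⋃ m : ℕ, E' ∩ {s : ℝ | v s ≤ m} ∩ Icc t (t + m) := by
      ext s
      simp only [mem_iUnion, mem_inter_iff, mem_Icc, mem_setOf_eq]
      constructor
      · intro hs
        have hvf : v s ≠ ⊤ := hvfin s hs.1
        obtain ⟨m₁, hm₁⟩ := ENNReal.exists_nat_gt hvf
        obtain ⟨m₂, hm₂⟩ := exists_nat_ge (s - t)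
        refine ⟨max m₁ m₂, ⟨hs, ?_⟩, hEsub hs.1, ?_⟩
        · exact le_trans hm₁.le (by exact_mod_cast Nat.cast_le.2 (le_max_left m₁ m₂))
        · have : (m₂:ℝ) ≤ max m₁ m₂ := by exact_mod_cast Nat.le_max_right m₁ m₂
          linarith
      · rintro ⟨n, ⟨⟨hs, _⟩, _⟩⟩; exact hs
    have hGm : ∃ m : ℕ, volume (E' ∩ {s : ℝ | v s ≤ m} ∩ Icc t (t + m)) ≠ 0 := by
      by_contra hcon
      push_neg at hcon
      refine hE'pos ?_
      rw [hcover]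
      exact measure_iUnion_null hcon
    obtain ⟨m, hVpos⟩ := hGm
    set B : Set ℝ := E' ∩ {s : ℝ | v s ≤ m} ∩ Icc t (t + m) with hB
    have hBmeas : MeasurableSet B :=
      (hE'meas.inter (measurableSet_le hv measurable_const)).inter measurableSet_Icc
    have hBE : B ⊆ E := fun s hs => hs.1.1.1
    have hBsub : B ⊆ Ici t := fun s hs => hEsub (hBE hs)
    have hVfin : volume B ≠ ⊤ :=
      (lt_of_le_of_lt (measure_mono inter_subset_right) measure_Icc_lt_top).ne
    set I : ℝ≥0∞ := ∫⁻ y in B, v y with hI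
    have hIfin : I ≠ ⊤ := by
      have : I ≤ (m:ℝ≥0∞) * volume B := by
        rw [hI]
        calc (∫⁻ y in B, v y) ≤ ∫⁻ _ in B, (m:ℝ≥0∞) :=
              setLIntegral_mono measurable_const fun s hs => hs.1.2
          _ = (m:ℝ≥0∞) * volume B := by rw [setLIntegral_const, mul_comm]
      exact (lt_of_le_of_lt this (ENNReal.mul_lt_top (natCast_lt_top m)
        (lt_top_iff_ne_top.2 hVfin))).ne
    have hIpos : I ≠ 0 := by
      intro h0
      have hsupp : B ⊆ Function.support v := fun s hs => hs.1.1.2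
      have : 0 < ∫⁻ y in B, v y := by
        rw [lintegral_pos_iff_support hv, Measure.restrict_apply
          (measurableSet_support hv), inter_eq_self_of_subset_right hsupp]
        exact pos_iff_ne_zero.2 hVpos
      exact this.ne' h0
    have hCapp := hC' (B.indicator 1) (measurable_one.indicator hBmeas)
    have hBsub0 : B ⊆ Ioi (0:ℝ) := fun s hs => lt_of_lt_of_le ht (hBsub hs)
    -- right-hand side of the test inequality
    have hRHS : (∫⁻ y in Set.Ioi (0:ℝ), B.indicator 1 y * v y) = I := by
      have heq : ∀ y, B.indicator 1 y * v y = B.indicator v y := by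
        intro y
        by_cases hy : y ∈ B
        · simp [indicator_of_mem hy]
        · simp [indicator_of_notMem hy]
      rw [lintegral_congr heq, lintegral_indicator hBmeas,
        Measure.restrict_restrict hBmeas, inter_eq_self_of_subset_left hBsub0]
    -- lower bound for the kernel integral
    have hkI : lam * I ≤ ∫⁻ y in B, k t y := by
      calc lam * I = ∫⁻ y in B, lam * v y := by
            rw [hI, lintegral_const_mul'' _ hv.aemeasurable.restrict]
        _ ≤ ∫⁻ y in B, k t y :=
            setLIntegral_mono hktm fun s hs => hklam s (hBE hs)
    have hchain : (lam * I) * U ^ (1/q) ≤ C' * I := by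
      have h1 : ((lam * I) ^ q * U) ^ (1/q) ≤
          (∫⁻ x in Set.Ioi (0:ℝ),
            (∫⁻ y in Set.Ioi x, k x y * B.indicator 1 y) ^ q * w x) ^ (1/q) := by
        refine ENNReal.rpow_le_rpow ?_ (by positivity)
        rw [← hUoo]
        exact le_trans (mul_le_mul_left (ENNReal.rpow_le_rpow hkI hq0.le) _)
          (hgen B hBmeas hBsub)
      have h2 : ((lam * I) ^ q * U) ^ (1/q) = (lam * I) * U ^ (1/q) := by
        rw [ENNReal.mul_rpow_of_nonneg _ _ (by positivity), ← ENNReal.rpow_mul,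
          mul_one_div_cancel hq0.ne', ENNReal.rpow_one]
      rw [← h2]
      exact le_trans h1 (by rw [hRHS] at hCapp; exact hCapp)
    -- cancel `I`
    have hrearr : (lam * U ^ (1/q)) * I ≤ C' * I := by
      calc (lam * U ^ (1/q)) * I = (lam * I) * U ^ (1/q) := by ring
        _ ≤ C' * I := hchain
    exact (ENNReal.mul_le_mul_iff_left hIpos hIfin).1 hrearr

lemma sigmaFinite_weighted {w : ℝ → ℝ≥0∞}
    (hwfin : ∀ x > (0:ℝ), (∫⁻ s in Set.Ioc 0 x, w s) < ⊤) :
    SigmaFinite ((volume.restrict (Set.Ioi (0:ℝ))).withDensity w) := by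
  set μ := (volume.restrict (Set.Ioi (0:ℝ))).withDensity w with hμ
  have happly : ∀ A : Set ℝ, MeasurableSet A → μ A = ∫⁻ s in A ∩ Set.Ioi 0, w s := by
    intro A hA
    rw [hμ, withDensity_apply _ hA, Measure.restrict_restrict hA]
  refine ⟨⟨⟨fun n => Iic 0 ∪ Ioc 0 n, fun _ => trivial, fun n => ?_, ?_⟩⟩⟩
  · calc μ (Iic 0 ∪ Ioc 0 n) ≤ μ (Iic 0) + μ (Ioc 0 n) := measure_union_le _ _
      _ < ⊤ := by
        have h1 : μ (Iic 0) = 0 := by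
          rw [happly _ measurableSet_Iic]
          have : Iic (0:ℝ) ∩ Ioi 0 = ∅ := by
            ext x; simp only [mem_inter_iff, mem_Iic, mem_Ioi, mem_empty_iff_false,
              iff_false, not_and, not_lt]
            intro h; exact h
          rw [this, Measure.restrict_empty, lintegral_zero_measure]
        have h2 : μ (Ioc 0 n) < ⊤ := by
          have hsub : Ioc (0:ℝ) n ⊆ Ioi 0 := fun x hx => hx.1
          rw [happly _ measurableSet_Ioc, inter_eq_self_of_subset_left hsub]
          calc (∫⁻ s in Ioc (0:ℝ) n, w s) ≤ ∫⁻ s in Ioc (0:ℝ) (n+1), w s :=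
              lintegral_mono_set (Ioc_subset_Ioc le_rfl (by linarith))
            _ < ⊤ := hwfin (n+1) (by positivity)
        rw [h1, zero_add]; exact h2
  · ext x
    simp only [mem_iUnion, mem_union, mem_Iic, mem_Ioc, mem_univ, iff_true]
    rcases le_or_gt x 0 with hx | hx
    · exact ⟨0, Or.inl hx⟩
    · obtain ⟨n, hn⟩ := exists_nat_ge x
      exact ⟨n, Or.inr ⟨hx, hn⟩⟩

lemma upper_bound_pointwise
    (q : ℝ) (hq : 1 ≤ q)
    (v w : ℝ → ℝ≥0∞) (hvm : Measurable v) (hwm : Measurable w)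
    (hwW : ∀ x > (0:ℝ), (0 < ∫⁻ s in Set.Ioc 0 x, w s) ∧ (∫⁻ s in Set.Ioc 0 x, w s) < ⊤)
    (k : ℝ → ℝ → ℝ≥0∞) (hkm : Measurable (Function.uncurry k))
    (hk1 : ∀ y, AntitoneOn (fun x => k x y) (Set.Ici 0))
    (d : ℝ≥0∞) (hd' : d < ⊤)
    (hk3 : ∀ x y z : ℝ, 0 ≤ x → x < y → y < z → k x z ≤ d * (k x y + k y z)) :
    ∀ᵐ y ∂(volume.restrict (Set.Ioi (0:ℝ))),
      (v y)⁻¹ * (∫⁻ x in Set.Ioo 0 y, w x * k x y ^ q) ^ (1/q) ≤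
        4 * max d 1 * ((⨆ t ∈ Set.Ioi (0 : ℝ),
              (∫⁻ s in Set.Ioc 0 t, w s * k s t ^ q) ^ (1 / q) *
                essSup (fun s => (v s)⁻¹) (volume.restrict (Set.Ici t)))
          + ⨆ t ∈ Set.Ioi (0 : ℝ),
              (∫⁻ s in Set.Ioc 0 t, w s) ^ (1 / q) *
                essSup (fun s => k t s * (v s)⁻¹) (volume.restrict (Set.Ici t))) := by
  have hq0 : (0:ℝ) < q := lt_of_lt_of_le zero_lt_one hq
  have hq0' : (0:ℝ) < 1/q := one_div_pos.2 hq0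
  have hq1' : 1/q ≤ 1 := by
    rw [div_le_one hq0]; exact hq
  set D : ℝ≥0∞ := max d 1 with hD
  have hD1 : (1:ℝ≥0∞) ≤ D := le_max_right _ _
  have hDt : D ≠ ⊤ := by
    rw [hD]; exact (max_lt hd' one_lt_top).ne
  set O₁ : ℝ≥0∞ := ⨆ t ∈ Set.Ioi (0 : ℝ),
      (∫⁻ s in Set.Ioc 0 t, w s * k s t ^ q) ^ (1 / q) *
        essSup (fun s => (v s)⁻¹) (volume.restrict (Set.Ici t)) with hO₁
  set O₂ : ℝ≥0∞ := ⨆ t ∈ Set.Ioi (0 : ℝ),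
      (∫⁻ s in Set.Ioc 0 t, w s) ^ (1 / q) *
        essSup (fun s => k t s * (v s)⁻¹) (volume.restrict (Set.Ici t)) with hO₂
  -- a.e. essSup bounds, uniformly over rational `t`
  have hae : ∀ᵐ y ∂volume, ∀ t : ℚ, (t:ℝ) ≤ y →
      ((v y)⁻¹ ≤ essSup (fun s => (v s)⁻¹) (volume.restrict (Set.Ici (t:ℝ))) ∧
       k t y * (v y)⁻¹ ≤
         essSup (fun s => k (t:ℝ) s * (v s)⁻¹) (volume.restrict (Set.Ici (t:ℝ)))) := by
    rw [ae_all_iff]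
    intro t
    have h1 : ∀ᵐ s ∂(volume.restrict (Set.Ici (t:ℝ))),
        (v s)⁻¹ ≤ essSup (fun s => (v s)⁻¹) (volume.restrict (Set.Ici (t:ℝ))) :=
      ae_le_essSup
    have h2 : ∀ᵐ s ∂(volume.restrict (Set.Ici (t:ℝ))),
        k (t:ℝ) s * (v s)⁻¹ ≤
          essSup (fun s => k (t:ℝ) s * (v s)⁻¹) (volume.restrict (Set.Ici (t:ℝ))) :=
      ae_le_essSup
    have h3 := (ae_restrict_iff' measurableSet_Ici).1 (h1.and h2)
    filter_upwards [h3] with y hy hty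
    exact hy hty
  rw [ae_restrict_iff' measurableSet_Ioi]
  filter_upwards [hae] with y hy hy0
  -- now `y > 0` is a fixed point satisfying the essSup bounds
  set W : ℝ≥0∞ := ∫⁻ x in Set.Ioo 0 y, w x * k x y ^ q with hW
  set Uy : ℝ≥0∞ := ∫⁻ s in Set.Ioc 0 y, w s with hUy
  obtain ⟨hUy0, hUyt⟩ := hwW y hy0
  -- find a rational `t ∈ (0,y)` with `Uy ≤ 2 * U t`
  have hUoo : (∫⁻ s in Set.Ioo 0 y, w s) = Uy := setLIntegral_congr Ioo_ae_eq_Ioc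
  obtain ⟨t, htpos, hty, hU2⟩ : ∃ t : ℚ, 0 < (t:ℝ) ∧ (t:ℝ) < y ∧
      Uy ≤ 2 * ∫⁻ s in Set.Ioc 0 (t:ℝ), w s := by
    set ν := volume.withDensity w with hν
    have hνa : ∀ A : Set ℝ, MeasurableSet A → ν A = ∫⁻ s in A, w s := fun A hA =>
      withDensity_apply w hA
    have hunion : Set.Ioo (0:ℝ) y =
        ⋃ t : {t : ℚ // 0 < (t:ℝ) ∧ (t:ℝ) < y}, Set.Ioc 0 ((t:ℚ):ℝ) := by
      ext x
      simp only [mem_Ioo, mem_iUnion, mem_Ioc]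
      constructor
      · rintro ⟨hx0, hxy⟩
        obtain ⟨r, hr1, hr2⟩ := exists_rat_btwn hxy
        exact ⟨⟨r, lt_trans hx0 hr1, hr2⟩, hx0, hr1.le⟩
      · rintro ⟨⟨r, hr0, hry⟩, hx0, hxr⟩
        exact ⟨hx0, lt_of_le_of_lt hxr hry⟩
    have hdir : Directed (· ⊆ ·)
        fun t : {t : ℚ // 0 < (t:ℝ) ∧ (t:ℝ) < y} => Set.Ioc (0:ℝ) ((t:ℚ):ℝ) := by
      rintro ⟨t₁, ht₁⟩ ⟨t₂, ht₂⟩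
      refine ⟨⟨max t₁ t₂, ?_, ?_⟩, ?_, ?_⟩
      · have : (t₁:ℝ) ≤ ((max t₁ t₂ : ℚ):ℝ) := by exact_mod_cast le_max_left t₁ t₂
        exact lt_of_lt_of_le ht₁.1 this
      · rcases max_cases t₁ t₂ with ⟨h, _⟩ | ⟨h, _⟩ <;> rw [h]
        exacts [ht₁.2, ht₂.2]
      · refine Ioc_subset_Ioc le_rfl ?_
        exact_mod_cast le_max_left t₁ t₂
      · refine Ioc_subset_Ioc le_rfl ?_
        exact_mod_cast le_max_right t₁ t₂
    have hhalf : Uy / 2 < Uy := ENNReal.half_lt_self hUy0.ne' hUyt.ne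
    have hsup : Uy = ⨆ t : {t : ℚ // 0 < (t:ℝ) ∧ (t:ℝ) < y},
        ν (Set.Ioc (0:ℝ) ((t:ℚ):ℝ)) := by
      rw [← hdir.measure_iUnion, ← hunion, hνa _ measurableSet_Ioo, hUoo]
    have hhalf2 := hhalf.trans_le hsup.le
    obtain ⟨⟨t, ht1, ht2⟩, htlt⟩ := lt_iSup_iff.1 hhalf2
    refine ⟨t, ht1, ht2, ?_⟩
    rw [hνa _ measurableSet_Ioc] at htlt
    have := (ENNReal.div_lt_iff (Or.inl (two_ne_zero)) (Or.inl (ofNat_ne_top))).1 htlt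
    calc Uy ≤ (∫⁻ s in Set.Ioc 0 (t:ℝ), w s) * 2 := this.le
      _ = 2 * ∫⁻ s in Set.Ioc 0 (t:ℝ), w s := mul_comm _ _
  set Ut : ℝ≥0∞ := ∫⁻ s in Set.Ioc 0 (t:ℝ), w s with hUt
  set W₁ : ℝ≥0∞ := ∫⁻ s in Set.Ioc 0 (t:ℝ), w s * k s (t:ℝ) ^ q with hW₁
  obtain ⟨hE₁, hE₂⟩ := hy t hty.le
  -- kernel splitting
  have hkx : ∀ u : ℝ, Measurable fun x => k x u := fun u =>
    hkm.comp (measurable_id.prodMk measurable_const)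
  have hsplitset : Set.Ioo (0:ℝ) y = Set.Ioc 0 (t:ℝ) ∪ Set.Ioo (t:ℝ) y := by
    ext x
    simp only [mem_Ioo, mem_union, mem_Ioc]
    constructor
    · rintro ⟨hx0, hxy⟩
      rcases le_or_gt x t with h | h
      · exact Or.inl ⟨hx0, h⟩
      · exact Or.inr ⟨h, hxy⟩
    · rintro (⟨hx0, hxt⟩ | ⟨htx, hxy⟩)
      · exact ⟨hx0, lt_of_le_of_lt hxt hty⟩
      · exact ⟨lt_trans htpos htx, hxy⟩
  have hdisj : Disjoint (Set.Ioc (0:ℝ) (t:ℝ)) (Set.Ioo (t:ℝ) y) := by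
    rw [Set.disjoint_left]
    rintro x ⟨_, hxt⟩ ⟨htx, _⟩
    exact absurd hxt (not_le.2 htx)
  -- pointwise kernel bound on (0, t]
  have hkbound : ∀ x ∈ Set.Ioc (0:ℝ) (t:ℝ),
      k x y ^ q ≤ (2*D) ^ q * (k x (t:ℝ) ^ q + k (t:ℝ) y ^ q) := by
    intro x hx
    have h1 : k x y ≤ D * (k x (t:ℝ) + k (t:ℝ) y) := by
      rcases eq_or_lt_of_le hx.2 with heq | hlt
      · rw [heq]
        calc k (t:ℝ) y ≤ k (t:ℝ) (t:ℝ) + k (t:ℝ) y := le_add_self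
          _ ≤ D * (k (t:ℝ) (t:ℝ) + k (t:ℝ) y) := le_mul_of_one_le_left (zero_le) hD1
      · calc k x y ≤ d * (k x (t:ℝ) + k (t:ℝ) y) := hk3 x t y hx.1.le hlt hty
          _ ≤ D * (k x (t:ℝ) + k (t:ℝ) y) :=
            mul_le_mul_left (le_max_left _ _) _
    calc k x y ^ q ≤ (D * (k x (t:ℝ) + k (t:ℝ) y)) ^ q := ENNReal.rpow_le_rpow h1 hq0.le
      _ = D ^ q * (k x (t:ℝ) + k (t:ℝ) y) ^ q := ENNReal.mul_rpow_of_nonneg _ _ hq0.le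
      _ ≤ D ^ q * (2 ^ q * (k x (t:ℝ) ^ q + k (t:ℝ) y ^ q)) :=
          mul_le_mul_right (ennreal_add_rpow_le hq0.le) _
      _ = (2*D) ^ q * (k x (t:ℝ) ^ q + k (t:ℝ) y ^ q) := by
          rw [ENNReal.mul_rpow_of_nonneg _ _ hq0.le]
          ring
  -- the main splitting estimate
  have hWsplit : W ≤ (2*D) ^ q * (W₁ + k (t:ℝ) y ^ q * Uy) := by
    have h2Dq1 : (1:ℝ≥0∞) ≤ (2*D) ^ q := by
      calc (1:ℝ≥0∞) = 1 ^ q := (ENNReal.one_rpow q).symm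
        _ ≤ (2*D) ^ q := ENNReal.rpow_le_rpow
            (le_trans hD1 (le_mul_of_one_le_left (zero_le) (by norm_num))) hq0.le
    have hpart1 : (∫⁻ x in Set.Ioc (0:ℝ) (t:ℝ), w x * k x y ^ q) ≤
        (2*D) ^ q * (W₁ + k (t:ℝ) y ^ q * Ut) := by
      calc (∫⁻ x in Set.Ioc (0:ℝ) (t:ℝ), w x * k x y ^ q)
          ≤ ∫⁻ x in Set.Ioc (0:ℝ) (t:ℝ),
              (2*D) ^ q * (w x * k x (t:ℝ) ^ q + w x * k (t:ℝ) y ^ q) := by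
            refine setLIntegral_mono' measurableSet_Ioc fun x hx => ?_
            calc w x * k x y ^ q
                ≤ w x * ((2*D) ^ q * (k x (t:ℝ) ^ q + k (t:ℝ) y ^ q)) :=
                  mul_le_mul_right (hkbound x hx) _
              _ = (2*D) ^ q * (w x * k x (t:ℝ) ^ q + w x * k (t:ℝ) y ^ q) := by ring
        _ = (2*D) ^ q * ((∫⁻ x in Set.Ioc (0:ℝ) (t:ℝ), w x * k x (t:ℝ) ^ q) +
              ∫⁻ x in Set.Ioc (0:ℝ) (t:ℝ), w x * k (t:ℝ) y ^ q) := by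
            rw [lintegral_const_mul''
              (f := fun x => w x * k x (t:ℝ) ^ q + w x * k (t:ℝ) y ^ q) _
              ((hwm.mul ((hkx (t:ℝ)).pow_const q)).add
              (hwm.mul measurable_const)).aemeasurable,
              lintegral_add_left (f := fun x => w x * k x (t:ℝ) ^ q)
                (hwm.mul ((hkx (t:ℝ)).pow_const q))]
        _ = (2*D) ^ q * (W₁ + k (t:ℝ) y ^ q * Ut) := by
            congr 1
            rw [hW₁, hUt]
            congr 1
            rw [lintegral_mul_const'' _ hwm.aemeasurable.restrict, mul_comm]
    have hpart2 : (∫⁻ x in Set.Ioo (t:ℝ) y, w x * k x y ^ q) ≤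
        k (t:ℝ) y ^ q * ∫⁻ s in Set.Ioo (t:ℝ) y, w s := by
      calc (∫⁻ x in Set.Ioo (t:ℝ) y, w x * k x y ^ q)
          ≤ ∫⁻ x in Set.Ioo (t:ℝ) y, k (t:ℝ) y ^ q * w x := by
            refine setLIntegral_mono' measurableSet_Ioo fun x hx => ?_
            have : k x y ≤ k (t:ℝ) y :=
              hk1 y (mem_Ici.2 htpos.le) (mem_Ici.2 (lt_trans htpos hx.1).le) hx.1.le
            calc w x * k x y ^ q ≤ w x * k (t:ℝ) y ^ q :=
                mul_le_mul_right (ENNReal.rpow_le_rpow this hq0.le) _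
              _ = k (t:ℝ) y ^ q * w x := mul_comm _ _
        _ = k (t:ℝ) y ^ q * ∫⁻ s in Set.Ioo (t:ℝ) y, w s := by
            rw [lintegral_const_mul'' _ hwm.aemeasurable.restrict]
    calc W = (∫⁻ x in Set.Ioc (0:ℝ) (t:ℝ), w x * k x y ^ q) +
        ∫⁻ x in Set.Ioo (t:ℝ) y, w x * k x y ^ q := by
          rw [hW, hsplitset, lintegral_union measurableSet_Ioo hdisj]
      _ ≤ (2*D) ^ q * (W₁ + k (t:ℝ) y ^ q * Ut) +
          k (t:ℝ) y ^ q * ∫⁻ s in Set.Ioo (t:ℝ) y, w s := add_le_add hpart1 hpart2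
      _ ≤ (2*D) ^ q * (W₁ + k (t:ℝ) y ^ q * Ut) +
          (2*D) ^ q * (k (t:ℝ) y ^ q * ∫⁻ s in Set.Ioo (t:ℝ) y, w s) := by
          exact add_le_add le_rfl (le_mul_of_one_le_left (zero_le) h2Dq1)
      _ = (2*D) ^ q * (W₁ + k (t:ℝ) y ^ q *
            (Ut + ∫⁻ s in Set.Ioo (t:ℝ) y, w s)) := by ring
      _ = (2*D) ^ q * (W₁ + k (t:ℝ) y ^ q * Uy) := by
          congr 2
          rw [hUt, ← lintegral_union measurableSet_Ioo hdisj, ← hsplitset, hUoo]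
  -- take (1/q)-th powers
  have hWrpow : W ^ (1/q) ≤ 2 * D * (W₁ ^ (1/q) + k (t:ℝ) y * Uy ^ (1/q)) := by
    calc W ^ (1/q) ≤ ((2*D) ^ q * (W₁ + k (t:ℝ) y ^ q * Uy)) ^ (1/q) :=
          ENNReal.rpow_le_rpow hWsplit hq0'.le
      _ = (2*D) * (W₁ + k (t:ℝ) y ^ q * Uy) ^ (1/q) := by
          rw [ENNReal.mul_rpow_of_nonneg _ _ hq0'.le, ← ENNReal.rpow_mul,
            mul_one_div_cancel hq0.ne', ENNReal.rpow_one]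
      _ ≤ (2*D) * (W₁ ^ (1/q) + (k (t:ℝ) y ^ q * Uy) ^ (1/q)) :=
          mul_le_mul_right (ENNReal.rpow_add_le_add_rpow _ _ hq0'.le hq1') _
      _ = 2 * D * (W₁ ^ (1/q) + k (t:ℝ) y * Uy ^ (1/q)) := by
          rw [ENNReal.mul_rpow_of_nonneg _ _ hq0'.le, ← ENNReal.rpow_mul,
            mul_one_div_cancel hq0.ne', ENNReal.rpow_one]
  -- multiply by `v y⁻¹` and bound each term
  have hterm1 : (v y)⁻¹ * W₁ ^ (1/q) ≤ O₁ := by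
    have h1 : W₁ ^ (1/q) * (v y)⁻¹ ≤ W₁ ^ (1/q) *
        essSup (fun s => (v s)⁻¹) (volume.restrict (Set.Ici (t:ℝ))) :=
      mul_le_mul_right hE₁ _
    rw [mul_comm]
    refine le_trans h1 ?_
    rw [hO₁]
    exact le_iSup₂ (f := fun t' (_ : t' ∈ Set.Ioi (0:ℝ)) =>
      (∫⁻ s in Set.Ioc 0 t', w s * k s t' ^ q) ^ (1 / q) *
        essSup (fun s => (v s)⁻¹) (volume.restrict (Set.Ici t'))) (t:ℝ) htpos
  have hterm2 : (k (t:ℝ) y * (v y)⁻¹) * Uy ^ (1/q) ≤ 2 * O₂ := by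
    have hUyrpow : Uy ^ (1/q) ≤ 2 * Ut ^ (1/q) := by
      calc Uy ^ (1/q) ≤ (2 * Ut) ^ (1/q) := ENNReal.rpow_le_rpow hU2 hq0'.le
        _ = 2 ^ (1/q) * Ut ^ (1/q) := ENNReal.mul_rpow_of_nonneg _ _ hq0'.le
        _ ≤ 2 * Ut ^ (1/q) := by
            refine mul_le_mul_left ?_ _
            calc (2:ℝ≥0∞) ^ (1/q) ≤ 2 ^ (1:ℝ) :=
                ENNReal.rpow_le_rpow_of_exponent_le (by norm_num) hq1'
              _ = 2 := ENNReal.rpow_one 2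
    calc (k (t:ℝ) y * (v y)⁻¹) * Uy ^ (1/q)
        ≤ essSup (fun s => k (t:ℝ) s * (v s)⁻¹) (volume.restrict (Set.Ici (t:ℝ))) *
            (2 * Ut ^ (1/q)) := mul_le_mul' hE₂ hUyrpow
      _ = 2 * (Ut ^ (1/q) *
            essSup (fun s => k (t:ℝ) s * (v s)⁻¹) (volume.restrict (Set.Ici (t:ℝ)))) := by
          ring
      _ ≤ 2 * O₂ := by
          refine mul_le_mul_right ?_ 2
          rw [hO₂]
          exact le_iSup₂ (f := fun t' (_ : t' ∈ Set.Ioi (0:ℝ)) =>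
            (∫⁻ s in Set.Ioc 0 t', w s) ^ (1 / q) *
              essSup (fun s => k t' s * (v s)⁻¹) (volume.restrict (Set.Ici t'))) (t:ℝ) htpos
  calc (v y)⁻¹ * W ^ (1/q)
      ≤ (v y)⁻¹ * (2 * D * (W₁ ^ (1/q) + k (t:ℝ) y * Uy ^ (1/q))) :=
        mul_le_mul_right hWrpow _
    _ = 2 * D * ((v y)⁻¹ * W₁ ^ (1/q) + (k (t:ℝ) y * (v y)⁻¹) * Uy ^ (1/q)) := by ring
    _ ≤ 2 * D * (O₁ + 2 * O₂) := mul_le_mul_right (add_le_add hterm1 hterm2) _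
    _ ≤ 2 * D * (2 * O₁ + 2 * O₂) := by
        refine mul_le_mul_right (add_le_add ?_ le_rfl) _
        exact le_mul_of_one_le_left (zero_le) (by norm_num)
    _ = 4 * D * (O₁ + O₂) := by ring

lemma upper_bound_main
    (q : ℝ) (hq : 1 ≤ q)
    (v w : ℝ → ℝ≥0∞) (hvm : Measurable v) (hwm : Measurable w)
    (hwW : ∀ x > (0:ℝ), (0 < ∫⁻ s in Set.Ioc 0 x, w s) ∧ (∫⁻ s in Set.Ioc 0 x, w s) < ⊤)
    (k : ℝ → ℝ → ℝ≥0∞) (hkm : Measurable (Function.uncurry k))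
    (hk1 : ∀ y, AntitoneOn (fun x => k x y) (Set.Ici 0))
    (d : ℝ≥0∞) (hd' : d < ⊤)
    (hk3 : ∀ x y z : ℝ, 0 ≤ x → x < y → y < z → k x z ≤ d * (k x y + k y z))
    (C' : ℝ≥0∞) (hC't : C' ≠ ⊤)
    (hgt : 4 * max d 1 * ((⨆ t ∈ Set.Ioi (0 : ℝ),
              (∫⁻ s in Set.Ioc 0 t, w s * k s t ^ q) ^ (1 / q) *
                essSup (fun s => (v s)⁻¹) (volume.restrict (Set.Ici t)))
          + ⨆ t ∈ Set.Ioi (0 : ℝ),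
              (∫⁻ s in Set.Ioc 0 t, w s) ^ (1 / q) *
                essSup (fun s => k t s * (v s)⁻¹) (volume.restrict (Set.Ici t))) < C')
    (h : ℝ → ℝ≥0∞) (hh : Measurable h) :
    (∫⁻ x in Set.Ioi (0:ℝ), (∫⁻ y in Set.Ioi x, k x y * h y) ^ q * w x) ^ (1 / q)
      ≤ C' * ∫⁻ y in Set.Ioi (0:ℝ), h y * v y := by
  have hq0 : (0:ℝ) < q := lt_of_lt_of_le zero_lt_one hq
  have hq0' : (0:ℝ) < 1/q := one_div_pos.2 hq0
  set μ : Measure ℝ := (volume.restrict (Set.Ioi (0:ℝ))).withDensity w with hμ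
  haveI : SigmaFinite μ := sigmaFinite_weighted (fun x hx => (hwW x hx).2)
  set ν : Measure ℝ := volume.restrict (Set.Ioi (0:ℝ)) with hν
  set f : ℝ → ℝ → ℝ≥0∞ :=
    fun x y => (Set.Ioi x).indicator (fun y' => k x y' * h y') y with hf
  have hfm : Measurable (Function.uncurry f) := by
    have heq : Function.uncurry f =
        fun p : ℝ × ℝ => if p.1 < p.2 then k p.1 p.2 * h p.2 else 0 := by
      funext p
      simp [hf, Function.uncurry, Set.indicator_apply, mem_Ioi]
    rw [heq]
    exact Measurable.ite (measurableSet_lt measurable_fst measurable_snd)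
      (hkm.mul (hh.comp measurable_snd)) measurable_const
  set W : ℝ → ℝ≥0∞ := fun y => ∫⁻ x in Set.Ioo 0 y, w x * k x y ^ q with hWdef
  -- identify the left-hand side
  have hLHS : (∫⁻ x, (∫⁻ y, f x y ∂ν) ^ q ∂μ) =
      ∫⁻ x in Set.Ioi (0:ℝ), (∫⁻ y in Set.Ioi x, k x y * h y) ^ q * w x := by
    have hG : Measurable fun x => (∫⁻ y, f x y ∂ν) ^ q :=
      (hfm.lintegral_prod_right).pow_const q
    rw [hμ, lintegral_withDensity_eq_lintegral_mul _ hwm hG]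
    refine setLIntegral_congr_fun measurableSet_Ioi ?_
    intro x hx
    have hsub : Set.Ioi x ⊆ Set.Ioi (0:ℝ) := Ioi_subset_Ioi (le_of_lt hx)
    have hx1 : (∫⁻ y, f x y ∂ν) = ∫⁻ y in Set.Ioi x, k x y * h y := by
      rw [hν, hf]
      rw [lintegral_indicator measurableSet_Ioi,
        Measure.restrict_restrict measurableSet_Ioi,
        inter_eq_self_of_subset_left hsub]
    simp only [Pi.mul_apply]
    rw [hx1, mul_comm]
  -- identify the right-hand side of Minkowski
  have hRHS : (∫⁻ y, (∫⁻ x, (f x y) ^ q ∂μ) ^ (1/q) ∂ν) =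
      ∫⁻ y in Set.Ioi (0:ℝ), h y * (W y) ^ (1/q) := by
    rw [hν]
    refine setLIntegral_congr_fun measurableSet_Ioi ?_
    intro y hy
    have hfy : Measurable fun x => (f x y) ^ q :=
      ((hfm.comp (measurable_id.prodMk measurable_const)).pow_const q)
    have hinner : (∫⁻ x, (f x y) ^ q ∂μ) = W y * h y ^ q := by
      rw [hμ, lintegral_withDensity_eq_lintegral_mul _ hwm hfy]
      have hptwise : ∀ x, (w * fun x => (f x y) ^ q) x =
          (Set.Iio y).indicator (fun x => w x * (k x y * h y) ^ q) x := by
        intro x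
        simp only [Pi.mul_apply]
        by_cases hxy : x < y
        · rw [indicator_of_mem (mem_Iio.2 hxy)]
          congr 1
          simp only [hf]
          rw [indicator_of_mem (mem_Ioi.2 hxy)]
        · rw [indicator_of_notMem (fun hc => hxy (mem_Iio.1 hc))]
          have : f x y = 0 := by
            simp only [hf]
            rw [indicator_of_notMem (fun hc => hxy (mem_Ioi.1 hc))]
          rw [this, ENNReal.zero_rpow_of_pos hq0, mul_zero]
      calc (∫⁻ x in Set.Ioi (0:ℝ), (w * fun x => (f x y) ^ q) x)
          = ∫⁻ x in Set.Ioi (0:ℝ),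
              (Set.Iio y).indicator (fun x => w x * (k x y * h y) ^ q) x :=
            lintegral_congr hptwise
        _ = ∫⁻ x in Set.Ioo 0 y, w x * (k x y * h y) ^ q := by
            rw [lintegral_indicator measurableSet_Iio,
              Measure.restrict_restrict measurableSet_Iio, Set.Iio_inter_Ioi]
        _ = ∫⁻ x in Set.Ioo 0 y, (w x * k x y ^ q) * h y ^ q := by
            refine lintegral_congr fun x => ?_
            rw [ENNReal.mul_rpow_of_nonneg _ _ hq0.le]
            ring
        _ = W y * h y ^ q := by
            have hky : Measurable fun x => k x y :=
              hkm.comp (measurable_id.prodMk measurable_const)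
            rw [hWdef, lintegral_mul_const'' (f := fun x => w x * k x y ^ q) _
              ((hwm.mul (hky.pow_const q)).aemeasurable.restrict)]
    beta_reduce
    rw [hinner, ENNReal.mul_rpow_of_nonneg _ _ hq0'.le, ← ENNReal.rpow_mul,
      mul_one_div_cancel hq0.ne', ENNReal.rpow_one, mul_comm]
  -- combine : Minkowski + pointwise estimate
  have hMink := minkowski_lintegral μ ν hq hfm
  rw [hLHS, hRHS] at hMink
  refine le_trans hMink ?_
  have hae := upper_bound_pointwise q hq v w hvm hwm hwW k hkm hk1 d hd' hk3
  have hae2 : ∀ᵐ y ∂(volume.restrict (Set.Ioi (0:ℝ))),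
      h y * (W y) ^ (1/q) ≤ C' * (h y * v y) := by
    filter_upwards [hae] with y hy
    have hlt : (v y)⁻¹ * (W y) ^ (1/q) < C' := lt_of_le_of_lt hy hgt
    have hWv : (W y) ^ (1/q) ≤ C' * v y := ennreal_le_mul_of_inv_mul_lt hlt
    calc h y * (W y) ^ (1/q) ≤ h y * (C' * v y) := mul_le_mul_right hWv _
      _ = C' * (h y * v y) := by ring
  calc (∫⁻ y in Set.Ioi (0:ℝ), h y * (W y) ^ (1/q))
      ≤ ∫⁻ y in Set.Ioi (0:ℝ), C' * (h y * v y) := lintegral_mono_ae hae2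
    _ = C' * ∫⁻ y in Set.Ioi (0:ℝ), h y * v y := lintegral_const_mul' _ _ hC't


/-- Oinarov: for `1 ≤ q < ∞` and an Oinarov kernel `k`, the best
constant `C` in `(∫_0^∞ (∫_x^∞ k(x,y)h(y)dy)^q w(x)dx)^{1/q} ≤ C ∫_0^∞ h v`
satisfies `C ≈ O₁ + O₂`. -/
theorem oinarov_kernel_L1_Lq
    (q : ℝ) (hq : 1 ≤ q)
    (v w : ℝ → ℝ≥0∞) (hv : IsWeight v) (hw : IsWeight w)
    (k : ℝ → ℝ → ℝ≥0∞) (hkm : Measurable (Function.uncurry k))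
    (hk1 : ∀ y, AntitoneOn (fun x => k x y) (Set.Ici 0))
    (hk2 : ∀ x, MonotoneOn (fun y => k x y) (Set.Ici 0))
    (d : ℝ≥0∞) (hd : 0 < d) (hd' : d < ∞)
    (hk3 : ∀ x y z : ℝ, 0 ≤ x → x < y → y < z → k x z ≤ d * (k x y + k y z))
    (hk4 : ∀ y > (0 : ℝ), 0 < k 0 y) :
    ∃ c₁ c₂ : ℝ≥0∞, 0 < c₁ ∧ c₂ < ∞ ∧
      c₁ * ((⨆ t ∈ Set.Ioi (0 : ℝ),
              (∫⁻ s in Set.Ioc 0 t, w s * k s t ^ q) ^ (1 / q) *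
                essSup (fun s => (v s)⁻¹) (volume.restrict (Set.Ici t)))
          + ⨆ t ∈ Set.Ioi (0 : ℝ),
              (∫⁻ s in Set.Ioc 0 t, w s) ^ (1 / q) *
                essSup (fun s => k t s * (v s)⁻¹) (volume.restrict (Set.Ici t)))
        ≤ sInf {C : ℝ≥0∞ | ∀ h : ℝ → ℝ≥0∞, Measurable h →
            (∫⁻ x in Set.Ioi (0 : ℝ),
                (∫⁻ y in Set.Ioi x, k x y * h y) ^ q * w x) ^ (1 / q)
              ≤ C * ∫⁻ y in Set.Ioi (0 : ℝ), h y * v y} ∧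
      sInf {C : ℝ≥0∞ | ∀ h : ℝ → ℝ≥0∞, Measurable h →
            (∫⁻ x in Set.Ioi (0 : ℝ),
                (∫⁻ y in Set.Ioi x, k x y * h y) ^ q * w x) ^ (1 / q)
              ≤ C * ∫⁻ y in Set.Ioi (0 : ℝ), h y * v y}
        ≤ c₂ * ((⨆ t ∈ Set.Ioi (0 : ℝ),
              (∫⁻ s in Set.Ioc 0 t, w s * k s t ^ q) ^ (1 / q) *
                essSup (fun s => (v s)⁻¹) (volume.restrict (Set.Ici t)))
          + ⨆ t ∈ Set.Ioi (0 : ℝ),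
              (∫⁻ s in Set.Ioc 0 t, w s) ^ (1 / q) *
                essSup (fun s => k t s * (v s)⁻¹) (volume.restrict (Set.Ici t))) := by
  refine ⟨2⁻¹, 4 * max d 1, ?_, ?_, ?_, ?_⟩
  · simp
  · exact ENNReal.mul_lt_top ofNat_lt_top (max_lt hd' one_lt_top)
  · -- lower bound
    refine le_sInf fun C' hC' => ?_
    have hC'' : ∀ h : ℝ → ℝ≥0∞, Measurable h →
        (∫⁻ x in Set.Ioi (0 : ℝ),
            (∫⁻ y in Set.Ioi x, k x y * h y) ^ q * w x) ^ (1 / q)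
          ≤ C' * ∫⁻ y in Set.Ioi (0 : ℝ), h y * v y := hC'
    have h1 : (⨆ t ∈ Set.Ioi (0 : ℝ),
        (∫⁻ s in Set.Ioc 0 t, w s * k s t ^ q) ^ (1 / q) *
          essSup (fun s => (v s)⁻¹) (volume.restrict (Set.Ici t))) ≤ C' :=
      iSup₂_le fun t ht =>
        lower_bound_O1 q hq v w hv.1 k hkm hk2 t (mem_Ioi.1 ht) C' hC''
    have h2 : (⨆ t ∈ Set.Ioi (0 : ℝ),
        (∫⁻ s in Set.Ioc 0 t, w s) ^ (1 / q) *
          essSup (fun s => k t s * (v s)⁻¹) (volume.restrict (Set.Ici t))) ≤ C' :=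
      iSup₂_le fun t ht =>
        lower_bound_O2 q hq v w hv.1 hw.1 k hkm hk1 t (mem_Ioi.1 ht)
          (hw.2 t (mem_Ioi.1 ht)).1 C' hC''
    calc 2⁻¹ * (_ + _) ≤ 2⁻¹ * (C' + C') := mul_le_mul_right (add_le_add h1 h2) _
      _ = 2⁻¹ * (2 * C') := by rw [two_mul]
      _ = C' := by
          rw [← mul_assoc, ENNReal.inv_mul_cancel two_ne_zero ofNat_ne_top, one_mul]
  · -- upper bound
    refine le_of_forall_gt_imp_ge_of_dense fun C' hC'gt => ?_
    rcases eq_or_ne C' ⊤ with rfl | hC't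
    · exact le_top
    · refine sInf_le ?_
      intro h hh
      exact upper_bound_main q hq v w hv.1 hw.1 hw.2 k hkm hk1 d hd' hk3 C' hC't
        hC'gt h hh
end
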